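/- arXiv:2208.10750 — 5 statements merged into one kernel-verified Lean document; each statement's English description precedes it below -/
import Mathlib

section
/- In the solvable group S = ℝ² ⋊ ℝ (Sol geometry), the centralizer of any lattice Γ ⊆ S is trivial. -/
/-- The 3-dimensional solvable Lie group `Sol = ℝ² ⋊ ℝ`, realized as the matrices
`[[e^t,0,x],[0,e^{−t},y],[0,0,1]]`, with coordinates `(x,y,t)` and multiplication
`(x,y,t)·(u,v,s) = (x + e^t u, y + e^{−t} v, t+s)`. -/
@[ext] structure Sol : Type where
  x : ℝ
  y : ℝ
  t : ℝ

namespace Sol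

noncomputable instance : Mul Sol :=
  ⟨fun a b => ⟨a.x + Real.exp a.t * b.x, a.y + Real.exp (-a.t) * b.y, a.t + b.t⟩⟩

instance : One Sol := ⟨⟨0, 0, 0⟩⟩

noncomputable instance : Inv Sol :=
  ⟨fun a => ⟨-(Real.exp (-a.t) * a.x), -(Real.exp a.t * a.y), -a.t⟩⟩

@[simp] lemma mul_x (a b : Sol) : (a * b).x = a.x + Real.exp a.t * b.x := rfl
@[simp] lemma mul_y (a b : Sol) : (a * b).y = a.y + Real.exp (-a.t) * b.y := rfl
@[simp] lemma mul_t (a b : Sol) : (a * b).t = a.t + b.t := rfl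
@[simp] lemma one_x : (1 : Sol).x = 0 := rfl
@[simp] lemma one_y : (1 : Sol).y = 0 := rfl
@[simp] lemma one_t : (1 : Sol).t = 0 := rfl
@[simp] lemma inv_x (a : Sol) : (a⁻¹).x = -(Real.exp (-a.t) * a.x) := rfl
@[simp] lemma inv_y (a : Sol) : (a⁻¹).y = -(Real.exp a.t * a.y) := rfl
@[simp] lemma inv_t (a : Sol) : (a⁻¹).t = -a.t := rfl

noncomputable instance : Group Sol where
  mul := (· * ·)
  one := 1
  inv := (·⁻¹)
  mul_assoc a b c := by
    ext <;> simp [Real.exp_add, neg_add] <;> ring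
  one_mul a := by ext <;> simp
  mul_one a := by ext <;> simp
  inv_mul_cancel a := by
    ext <;> simp [← Real.exp_add] <;> ring_nf <;> simp

end Sol

/-- Topology on `Sol`, induced from its global coordinates in `ℝ³`. -/
instance : TopologicalSpace Sol :=
  TopologicalSpace.induced (fun g => (g.x, g.y, g.t)) inferInstance

instance : MeasurableSpace Sol := borel Sol

/-- (Left) Haar measure on `Sol`: in the coordinates `(x,y,t)` the left-invariant
volume is just Lebesgue measure `dx dy dt`. -/
noncomputable def solHaar : MeasureTheory.Measure Sol :=
  (MeasureTheory.volume : MeasureTheory.Measure (ℝ × ℝ × ℝ)).map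
    (fun p => ⟨p.1, p.2.1, p.2.2⟩)
open MeasureTheory Set

-- generic covering lower bound
lemma cover_bound {G : Type*} [NormedAddCommGroup G] [MeasurableSpace G] [BorelSpace G]
    [TopologicalSpace.SeparableSpace G]
    (μ : Measure G) [μ.IsAddRightInvariant]
    {L E : Set G} {δ : ℝ} (hδ : 0 < δ)
    (hsep : ∀ ℓ₁ ∈ L, ∀ ℓ₂ ∈ L, ℓ₁ ≠ ℓ₂ → δ ≤ ‖ℓ₁ - ℓ₂‖)
    (hE : MeasurableSet E)
    (hcov : ∀ g : G, ∃ ℓ ∈ L, g + ℓ ∈ E) :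
    μ (Metric.ball (0 : G) (δ/4)) ≤ μ E := by
  have hLc : L.Countable := by
    refine Set.PairwiseDisjoint.countable_of_isOpen
      (s := fun ℓ => Metric.ball ℓ (δ/2)) ?_ (fun ℓ _ => Metric.isOpen_ball)
      (fun ℓ _ => ⟨ℓ, Metric.mem_ball_self (by positivity)⟩)
    intro ℓ₁ h₁ ℓ₂ h₂ hne
    refine Set.disjoint_left.2 fun z hz1 hz2 => ?_
    have : dist ℓ₁ ℓ₂ < δ := by
      calc dist ℓ₁ ℓ₂ ≤ dist ℓ₁ z + dist z ℓ₂ := dist_triangle _ _ _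
        _ < δ/2 + δ/2 := by
            have := Metric.mem_ball.1 hz1
            have := Metric.mem_ball.1 hz2
            rw [dist_comm ℓ₁ z]; linarith
        _ = δ := by ring
    have := hsep ℓ₁ h₁ ℓ₂ h₂ hne
    rw [← dist_eq_norm] at this; linarith
  set B := Metric.ball (0 : G) (δ/4) with hB
  set A : G → Set G := fun ℓ => E ∩ {y | y - ℓ ∈ B} with hA
  have hAmeas : ∀ ℓ, MeasurableSet (A ℓ) := fun ℓ =>
    hE.inter (Metric.isOpen_ball.measurableSet.preimage (measurable_id.sub_const ℓ))
  have hdisj : L.PairwiseDisjoint A := by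
    intro ℓ₁ h₁ ℓ₂ h₂ hne
    refine Set.disjoint_left.2 fun z hz1 hz2 => ?_
    have h1 : ‖z - ℓ₁‖ < δ/4 := by
      have := hz1.2; simpa [hB, Metric.mem_ball, dist_eq_norm] using this
    have h2 : ‖z - ℓ₂‖ < δ/4 := by
      have := hz2.2; simpa [hB, Metric.mem_ball, dist_eq_norm] using this
    have : ‖ℓ₁ - ℓ₂‖ < δ := by
      have : ℓ₁ - ℓ₂ = (z - ℓ₂) - (z - ℓ₁) := by abel
      rw [this]
      calc ‖(z - ℓ₂) - (z - ℓ₁)‖ ≤ ‖z - ℓ₂‖ + ‖z - ℓ₁‖ := norm_sub_le _ _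
        _ < δ/4 + δ/4 := by linarith
        _ ≤ δ := by linarith
    have := hsep ℓ₁ h₁ ℓ₂ h₂ hne; linarith
  have hBsub : B ⊆ ⋃ ℓ ∈ L, (fun x => x + ℓ) ⁻¹' (A ℓ) := by
    intro x hx
    obtain ⟨ℓ, hℓ, hxE⟩ := hcov x
    refine Set.mem_biUnion hℓ ⟨hxE, ?_⟩
    simpa using hx
  calc μ B ≤ μ (⋃ ℓ ∈ L, (fun x => x + ℓ) ⁻¹' (A ℓ)) := measure_mono hBsub
    _ ≤ ∑' ℓ : L, μ ((fun x => x + (ℓ:G)) ⁻¹' (A ℓ)) := measure_biUnion_le μ hLc _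
    _ = ∑' ℓ : L, μ (A ℓ) := by
        refine tsum_congr fun ℓ => ?_
        exact measure_preimage_add_right μ _ _
    _ = μ (⋃ ℓ ∈ L, A ℓ) := (measure_biUnion hLc hdisj fun ℓ _ => hAmeas ℓ).symm
    _ ≤ μ E := measure_mono (Set.iUnion₂_subset fun ℓ _ => inter_subset_left)


namespace SolLattice

/-- Coordinates as a homeomorphism. -/
def solHomeo : Sol ≃ₜ ℝ × ℝ × ℝ where
  toFun g := (g.x, g.y, g.t)
  invFun p := ⟨p.1, p.2.1, p.2.2⟩
  left_inv g := rfl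
  right_inv p := rfl
  continuous_toFun := continuous_induced_dom
  continuous_invFun := continuous_induced_rng.2 continuous_id

instance : BorelSpace Sol := ⟨rfl⟩

/-- Coordinates as a measurable equivalence. -/
def solMeq : Sol ≃ᵐ ℝ × ℝ × ℝ := solHomeo.toMeasurableEquiv

lemma measurable_mk : Measurable (fun p : ℝ × ℝ × ℝ => (⟨p.1, p.2.1, p.2.2⟩ : Sol)) :=
  solMeq.symm.measurable

lemma solHaar_apply {A : Set Sol} (hA : MeasurableSet A) :
    solHaar A = volume ((fun p : ℝ × ℝ × ℝ => (⟨p.1, p.2.1, p.2.2⟩ : Sol)) ⁻¹' A) :=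
  MeasureTheory.Measure.map_apply measurable_mk hA

lemma mk_measurePreserving :
    MeasurePreserving (fun p : ℝ × ℝ × ℝ => (⟨p.1, p.2.1, p.2.2⟩ : Sol)) volume solHaar :=
  ⟨measurable_mk, rfl⟩

lemma coords_measurePreserving :
    MeasurePreserving (fun g : Sol => (g.x, g.y, g.t)) solHaar volume :=
  MeasurePreserving.symm (solMeq.symm) mk_measurePreserving

end SolLattice

namespace SolLattice

/-- Reordering `(t,(x,y)) ↦ (x,(y,t))` is measure preserving on `ℝ³`. -/
lemma reorder_mp :
    MeasurePreserving (fun p : ℝ × ℝ × ℝ => (p.2.1, p.2.2, p.1)) volume volume := by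
  have h1 : MeasurePreserving (Prod.swap : ℝ × (ℝ × ℝ) → (ℝ × ℝ) × ℝ)
      (volume : Measure (ℝ × (ℝ × ℝ))) (volume : Measure ((ℝ × ℝ) × ℝ)) :=
    Measure.measurePreserving_swap
  have h2 := MeasureTheory.volume_preserving_prodAssoc (α₁ := ℝ) (β₁ := ℝ) (γ₁ := ℝ)
  exact h2.comp h1

/-- Reordering `(p,(q,u)) ↦ (u,(p,q))` is measure preserving on `ℝ³`. -/
lemma reorderInv_mp :
    MeasurePreserving (fun p : ℝ × ℝ × ℝ => (p.2.2, p.1, p.2.1)) volume volume := by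
  have h1 : MeasurePreserving (MeasurableEquiv.prodAssoc.symm : ℝ × ℝ × ℝ ≃ᵐ (ℝ × ℝ) × ℝ)
      (volume : Measure (ℝ × ℝ × ℝ)) (volume : Measure ((ℝ × ℝ) × ℝ)) :=
    (MeasureTheory.volume_preserving_prodAssoc (α₁ := ℝ) (β₁ := ℝ) (γ₁ := ℝ)).symm
      MeasurableEquiv.prodAssoc
  have h2 : MeasurePreserving (Prod.swap : (ℝ × ℝ) × ℝ → ℝ × (ℝ × ℝ))
      (volume : Measure ((ℝ × ℝ) × ℝ)) (volume : Measure (ℝ × (ℝ × ℝ))) :=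
    Measure.measurePreserving_swap
  exact h2.comp h1

lemma smul_prod_smul (c d : ENNReal) (hd : d ≠ ⊤) :
    (c • (volume : Measure ℝ)).prod (d • (volume : Measure ℝ))
      = (c * d) • ((volume : Measure ℝ).prod volume) := by
  ext s hs
  rw [Measure.smul_apply, Measure.prod_apply hs, Measure.prod_apply hs,
    MeasureTheory.lintegral_smul_measure]
  simp only [Measure.smul_apply, smul_eq_mul]
  rw [MeasureTheory.lintegral_const_mul' _ _ hd, ← mul_assoc]

/-- For each `u`, dilation `(p,q) ↦ (eᵘ p, e⁻ᵘ q)` preserves planar Lebesgue measure. -/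
lemma dilate_map_eq (u : ℝ) :
    Measure.map (fun pq : ℝ × ℝ => (Real.exp u * pq.1, Real.exp (-u) * pq.2))
      (volume : Measure (ℝ × ℝ)) = volume := by
  have h1 : (fun pq : ℝ × ℝ => (Real.exp u * pq.1, Real.exp (-u) * pq.2))
      = Prod.map (fun x => Real.exp u * x) (fun y => Real.exp (-u) * y) := rfl
  rw [Measure.volume_eq_prod, h1,
    ← Measure.map_prod_map _ _ (measurable_const_mul _) (measurable_const_mul _),
    Real.map_volume_mul_left (Real.exp_ne_zero u),
    Real.map_volume_mul_left (Real.exp_ne_zero (-u)),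
    smul_prod_smul _ _ ENNReal.ofReal_ne_top]
  rw [abs_inv, abs_of_pos (Real.exp_pos u), abs_inv, abs_of_pos (Real.exp_pos (-u)),
    ← ENNReal.ofReal_mul (by positivity)]
  rw [← Real.exp_neg, ← Real.exp_neg, ← Real.exp_add]
  simp

/-- The shear `(p,q,u) ↦ (eᵘ p, e⁻ᵘ q, u)` (written with `u` last) preserves `ℝ³` volume. -/
lemma theta_mp :
    MeasurePreserving
      (fun z : ℝ × ℝ × ℝ => (Real.exp z.2.2 * z.1, Real.exp (-z.2.2) * z.2.1, z.2.2))
      volume volume := by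
  have hskew : MeasurePreserving
      (fun w : ℝ × (ℝ × ℝ) => (w.1, (Real.exp w.1 * w.2.1, Real.exp (-w.1) * w.2.2)))
      (volume : Measure (ℝ × (ℝ × ℝ))) (volume : Measure (ℝ × (ℝ × ℝ))) := by
    have hgm : Measurable (Function.uncurry
        (fun (u : ℝ) (pq : ℝ × ℝ) => (Real.exp u * pq.1, Real.exp (-u) * pq.2))) := by
      apply Measurable.prod
      · exact (Real.measurable_exp.comp measurable_fst).mul (measurable_fst.comp measurable_snd)
      · exact (Real.measurable_exp.comp measurable_fst.neg).mul
          (measurable_snd.comp measurable_snd)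
    have := MeasurePreserving.skew_product (μa := (volume : Measure ℝ))
      (μb := (volume : Measure ℝ)) (μc := (volume : Measure (ℝ × ℝ)))
      (μd := (volume : Measure (ℝ × ℝ))) (f := id)
      (g := fun (u : ℝ) (pq : ℝ × ℝ) => (Real.exp u * pq.1, Real.exp (-u) * pq.2))
      (MeasurePreserving.id _) hgm (Filter.Eventually.of_forall fun u => dilate_map_eq u)
    rw [Measure.volume_eq_prod]
    exact this
  have := (reorder_mp.comp hskew).comp reorderInv_mp
  convert this using 1
  rfl

/-- Left translation by a horizontal element preserves `solHaar`. -/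
lemma translate_mp (a b : ℝ) :
    MeasurePreserving (fun z : Sol => (⟨a, b, 0⟩ : Sol) * z) solHaar solHaar := by
  have htr : MeasurePreserving (fun p : ℝ × ℝ × ℝ => (a + p.1, b + p.2.1, p.2.2))
      (volume : Measure (ℝ × ℝ × ℝ)) volume := by
    have h1 : MeasurePreserving (fun x : ℝ => a + x) volume volume :=
      measurePreserving_add_left volume a
    have h2 : MeasurePreserving (fun y : ℝ => b + y) volume volume :=
      measurePreserving_add_left volume b
    have h3 := h1.prod (h2.prod (MeasurePreserving.id (volume : Measure ℝ)))
    rw [Measure.volume_eq_prod]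
    rw [Measure.volume_eq_prod (α := ℝ) (β := ℝ)]
    exact h3
  have hfun : (fun z : Sol => (⟨a, b, 0⟩ : Sol) * z)
      = (fun p : ℝ × ℝ × ℝ => (⟨p.1, p.2.1, p.2.2⟩ : Sol))
        ∘ (fun p : ℝ × ℝ × ℝ => (a + p.1, b + p.2.1, p.2.2))
        ∘ (fun g : Sol => (g.x, g.y, g.t)) := by
    funext z
    ext <;> simp
  rw [hfun]
  exact (mk_measurePreserving.comp htr).comp coords_measurePreserving

end SolLattice

namespace SolLattice

lemma exists_discreteness_radius (Γ : Subgroup Sol) (hdisc : DiscreteTopology Γ) :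
    ∃ ε > 0, ∀ γ ∈ Γ, |γ.x| < ε → |γ.y| < ε → |γ.t| < ε → γ = 1 := by
  have hopen : IsOpen ({1} : Set Γ) := isOpen_discrete _
  rw [isOpen_induced_iff] at hopen
  obtain ⟨U, hU, hU1⟩ := hopen
  rw [isOpen_induced_iff] at hU
  obtain ⟨V, hV, hVU⟩ := hU
  have h1V : ((0 : ℝ), (0 : ℝ), (0 : ℝ)) ∈ V := by
    have : (1 : Sol) ∈ U := by
      have : ((1 : Γ) : Sol) ∈ U := by
        have : (1 : Γ) ∈ (Subtype.val ⁻¹' U : Set Γ) := by rw [hU1]; rfl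
        exact this
      simpa using this
    rw [← hVU] at this
    exact this
  obtain ⟨ε, hε, hball⟩ := Metric.isOpen_iff.1 hV _ h1V
  refine ⟨ε, hε, fun γ hγ hx hy ht => ?_⟩
  have hmem : ((γ.x, γ.y, γ.t) : ℝ × ℝ × ℝ) ∈ Metric.ball ((0 : ℝ), (0 : ℝ), (0 : ℝ)) ε := by
    rw [Metric.mem_ball, Prod.dist_eq, Prod.dist_eq]
    simp only [Real.dist_eq, sub_zero]
    exact max_lt hx (max_lt hy ht)
  have hγU : γ ∈ U := by rw [← hVU]; exact hball hmem
  have : (⟨γ, hγ⟩ : Γ) ∈ (Subtype.val ⁻¹' U : Set Γ) := hγU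
  rw [hU1] at this
  simpa using congrArg Subtype.val this

end SolLattice

namespace SolLattice

/-- If all elements of `Γ` lie in the plane `t = 0`, then any set of representatives of
the cosets has infinite Haar measure. -/
lemma plane_case (Γ : Subgroup Sol) {ε : ℝ} (hε : 0 < ε)
    (hsep : ∀ γ ∈ Γ, |γ.x| < ε → |γ.y| < ε → |γ.t| < ε → γ = 1)
    (hΓt : ∀ γ ∈ Γ, γ.t = 0)
    {s : Set Sol} (hs : MeasurableSet s)
    (hcov : ∀ g : Sol, ∃ γ ∈ Γ, γ * g ∈ s) :
    solHaar s = ⊤ := by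
  classical
  set S₀ : Set (ℝ × ℝ × ℝ) := (fun p : ℝ × ℝ × ℝ => (⟨p.1, p.2.1, p.2.2⟩ : Sol)) ⁻¹' s with hS₀
  have hS₀m : MeasurableSet S₀ := hs.preimage measurable_mk
  have hvolS₀ : solHaar s = volume S₀ := solHaar_apply hs
  -- reorder to put `t` first
  set S₂ : Set (ℝ × ℝ × ℝ) := (fun p : ℝ × ℝ × ℝ => (p.2.1, p.2.2, p.1)) ⁻¹' S₀ with hS₂
  have hS₂m : MeasurableSet S₂ := hS₀m.preimage reorder_mp.measurable
  have hvolS₂ : volume S₂ = volume S₀ := reorder_mp.measure_preimage hS₀m.nullMeasurableSet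
  -- the group of translations
  set L : Set (ℝ × ℝ) := (fun γ : Sol => (γ.x, γ.y)) '' (Γ : Set Sol) with hL
  have hLsep : ∀ ℓ₁ ∈ L, ∀ ℓ₂ ∈ L, ℓ₁ ≠ ℓ₂ → ε ≤ ‖ℓ₁ - ℓ₂‖ := by
    rintro ℓ₁ ⟨γ₁, hγ₁, rfl⟩ ℓ₂ ⟨γ₂, hγ₂, rfl⟩ hne
    have hσ : γ₁ * γ₂⁻¹ ∈ Γ := mul_mem hγ₁ (inv_mem hγ₂)
    have ht1 : γ₁.t = 0 := hΓt _ hγ₁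
    have ht2 : γ₂.t = 0 := hΓt _ hγ₂
    have hcoord : (γ₁ * γ₂⁻¹).x = γ₁.x - γ₂.x ∧ (γ₁ * γ₂⁻¹).y = γ₁.y - γ₂.y
        ∧ (γ₁ * γ₂⁻¹).t = 0 := by
      refine ⟨?_, ?_, ?_⟩ <;> simp [ht1, ht2] <;> ring
    have hne1 : γ₁ * γ₂⁻¹ ≠ 1 := by
      intro h
      apply hne
      have hx := congrArg Sol.x h
      have hy := congrArg Sol.y h
      rw [hcoord.1] at hx; rw [hcoord.2.1] at hy
      simp at hx hy
      have : γ₁.x = γ₂.x := by linarith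
      have : γ₁.y = γ₂.y := by linarith [hy]
      simp_all
    by_contra hlt
    push_neg at hlt
    rw [Prod.norm_def] at hlt
    simp only [Prod.fst_sub, Prod.snd_sub, Real.norm_eq_abs] at hlt
    have h1 : |(γ₁ * γ₂⁻¹).x| < ε := by rw [hcoord.1]; exact lt_of_le_of_lt (le_max_left _ _) hlt
    have h2 : |(γ₁ * γ₂⁻¹).y| < ε := by rw [hcoord.2.1]; exact lt_of_le_of_lt (le_max_right _ _) hlt
    have h3 : |(γ₁ * γ₂⁻¹).t| < ε := by rw [hcoord.2.2]; simpa using hε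
    exact hne1 (hsep _ hσ h1 h2 h3)
  -- every `t`-slice of `S₂` has measure at least that of a fixed ball
  have hslice : ∀ t : ℝ, (volume : Measure (ℝ × ℝ)) (Prod.mk t ⁻¹' S₂) = ⊤ ∨
      volume (Metric.ball (0 : ℝ × ℝ) (ε/4)) ≤ (volume : Measure (ℝ × ℝ)) (Prod.mk t ⁻¹' S₂) := by
    intro t
    right
    have hEm : MeasurableSet (Prod.mk t ⁻¹' S₂) := hS₂m.preimage measurable_prodMk_left
    refine cover_bound volume hε hLsep hEm ?_
    rintro pq
    obtain ⟨γ, hγ, hγs⟩ := hcov ⟨pq.1, pq.2, t⟩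
    refine ⟨(γ.x, γ.y), ⟨γ, hγ, rfl⟩, ?_⟩
    have hmul : γ * (⟨pq.1, pq.2, t⟩ : Sol) = ⟨γ.x + pq.1, γ.y + pq.2, t⟩ := by
      ext <;> simp [hΓt _ hγ]
    rw [hmul] at hγs
    simp only [Set.mem_preimage, hS₂, hS₀, Prod.fst_add, Prod.snd_add]
    have heq : (⟨pq.1 + γ.x, pq.2 + γ.y, t⟩ : Sol) = (⟨γ.x + pq.1, γ.y + pq.2, t⟩ : Sol) := by
      rw [Sol.mk.injEq]
      exact ⟨by ring, by ring, rfl⟩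
    rw [heq]
    exact hγs
  -- conclude
  have hb : (0 : ENNReal) < volume (Metric.ball (0 : ℝ × ℝ) (ε/4)) :=
    Metric.measure_ball_pos volume _ (by positivity)
  have : volume S₂ = ⊤ := by
    rw [Measure.volume_eq_prod, Measure.prod_apply hS₂m]
    have hge : ∀ t : ℝ, volume (Metric.ball (0 : ℝ × ℝ) (ε/4))
        ≤ (volume : Measure (ℝ × ℝ)) (Prod.mk t ⁻¹' S₂) := by
      intro t
      rcases hslice t with h | h
      · rw [h]; exact le_top
      · exact h
    refine top_le_iff.1 ?_
    calc (⊤ : ENNReal) = volume (Metric.ball (0 : ℝ × ℝ) (ε/4)) * volume (Set.univ : Set ℝ) := by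
          rw [Real.volume_univ, ENNReal.mul_top hb.ne']
      _ = ∫⁻ _ : ℝ, volume (Metric.ball (0 : ℝ × ℝ) (ε/4)) := by rw [lintegral_const]
      _ ≤ ∫⁻ t : ℝ, (volume : Measure (ℝ × ℝ)) (Prod.mk t ⁻¹' S₂) := lintegral_mono hge
  rw [hvolS₀, ← hvolS₂, this]

end SolLattice

namespace SolLattice

/-- If all elements of `Γ` lie on the one-parameter curve
`τ ↦ (c(eᵗ1), d(e⁻ᵗ1), τ)`, then any set of representatives has infinite measure. -/
lemma curve_case (Γ : Subgroup Sol) {ε : ℝ} (hε : 0 < ε) (c d : ℝ)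
    (hcurve : ∀ γ ∈ Γ, γ = (⟨c * (Real.exp γ.t - 1), d * (Real.exp (-γ.t) - 1), γ.t⟩ : Sol))
    (hTsep : ∀ γ₁ ∈ Γ, ∀ γ₂ ∈ Γ, γ₁.t ≠ γ₂.t → ε ≤ |γ₁.t - γ₂.t|)
    {s : Set Sol} (hs : MeasurableSet s)
    (hcov : ∀ g : Sol, ∃ γ ∈ Γ, γ * g ∈ s) :
    solHaar s = ⊤ := by
  classical
  set h : Sol := (⟨-c, -d, 0⟩ : Sol) with hh
  set s' : Set Sol := (fun z : Sol => h * z) ⁻¹' s with hs'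
  have hs'm : MeasurableSet s' := hs.preimage (translate_mp (-c) (-d)).measurable
  have hs'vol : solHaar s' = solHaar s :=
    (translate_mp (-c) (-d)).measure_preimage hs.nullMeasurableSet
  set S₀ : Set (ℝ × ℝ × ℝ) := (fun p : ℝ × ℝ × ℝ => (⟨p.1, p.2.1, p.2.2⟩ : Sol)) ⁻¹' s'
    with hS₀
  have hS₀m : MeasurableSet S₀ := hs'm.preimage measurable_mk
  have hvolS₀ : solHaar s' = volume S₀ := solHaar_apply hs'm
  set S₁ : Set (ℝ × ℝ × ℝ) :=
    (fun z : ℝ × ℝ × ℝ => (Real.exp z.2.2 * z.1, Real.exp (-z.2.2) * z.2.1, z.2.2)) ⁻¹' S₀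
    with hS₁
  have hS₁m : MeasurableSet S₁ := hS₀m.preimage theta_mp.measurable
  have hvolS₁ : volume S₁ = volume S₀ := theta_mp.measure_preimage hS₀m.nullMeasurableSet
  -- key covering property of S₁
  have hcov₁ : ∀ p q t : ℝ, ∃ γ ∈ Γ, ((p, q, t + γ.t) : ℝ × ℝ × ℝ) ∈ S₁ := by
    intro p q t
    set z : Sol := ⟨Real.exp t * p, Real.exp (-t) * q, t⟩ with hz
    obtain ⟨γ, hγ, hγs⟩ := hcov (h * z)
    refine ⟨γ, hγ, ?_⟩
    have hγeq := hcurve γ hγ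
    -- γ * h = h * ⟨0,0,γ.t⟩
    have hkey : γ * h = h * (⟨0, 0, γ.t⟩ : Sol) := by
      rw [hγeq]
      ext <;> simp <;> ring
    have hmem : (⟨0, 0, γ.t⟩ : Sol) * z ∈ s' := by
      have : γ * (h * z) = h * ((⟨0, 0, γ.t⟩ : Sol) * z) := by
        rw [← mul_assoc, hkey, mul_assoc]
      rw [this] at hγs
      exact hγs
    have haz : (⟨0, 0, γ.t⟩ : Sol) * z
        = ⟨Real.exp (t + γ.t) * p, Real.exp (-(t + γ.t)) * q, t + γ.t⟩ := by
      rw [hz]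
      ext <;> simp [Real.exp_add, neg_add] <;> ring
    simp only [hS₁, hS₀, Set.mem_preimage]
    rw [← haz]
    exact hmem
  -- each fiber has measure ≥ ball
  have hb : (0 : ENNReal) < volume (Metric.ball (0 : ℝ) (ε/4)) :=
    Metric.measure_ball_pos volume _ (by positivity)
  have hfiber : ∀ p q : ℝ,
      volume (Metric.ball (0 : ℝ) (ε/4)) ≤ volume {u : ℝ | ((p, q, u) : ℝ × ℝ × ℝ) ∈ S₁} := by
    intro p q
    have hEm : MeasurableSet {u : ℝ | ((p, q, u) : ℝ × ℝ × ℝ) ∈ S₁} := by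
      have : Measurable (fun u : ℝ => ((p, q, u) : ℝ × ℝ × ℝ)) :=
        measurable_const.prodMk (measurable_const.prodMk measurable_id)
      exact hS₁m.preimage this
    refine cover_bound (L := Sol.t '' (Γ : Set Sol)) volume hε ?_ hEm ?_
    · rintro τ₁ ⟨γ₁, hγ₁, rfl⟩ τ₂ ⟨γ₂, hγ₂, rfl⟩ hne
      simpa [Real.norm_eq_abs] using hTsep γ₁ hγ₁ γ₂ hγ₂ hne
    · intro t
      obtain ⟨γ, hγ, hmem⟩ := hcov₁ p q t
      exact ⟨γ.t, ⟨γ, hγ, rfl⟩, hmem⟩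
  -- Fubini
  have hslice2 : ∀ p : ℝ, (volume : Measure (ℝ × ℝ)) (Prod.mk p ⁻¹' S₁) = ⊤ := by
    intro p
    have hm : MeasurableSet (Prod.mk p ⁻¹' S₁) := hS₁m.preimage measurable_prodMk_left
    rw [Measure.volume_eq_prod, Measure.prod_apply hm]
    refine top_le_iff.1 ?_
    calc (⊤ : ENNReal) = volume (Metric.ball (0 : ℝ) (ε/4)) * volume (Set.univ : Set ℝ) := by
          rw [Real.volume_univ, ENNReal.mul_top hb.ne']
      _ = ∫⁻ _ : ℝ, volume (Metric.ball (0 : ℝ) (ε/4)) := by rw [lintegral_const]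
      _ ≤ ∫⁻ q : ℝ, volume (Prod.mk q ⁻¹' (Prod.mk p ⁻¹' S₁)) := by
          refine lintegral_mono fun q => ?_
          have : Prod.mk q ⁻¹' (Prod.mk p ⁻¹' S₁) = {u : ℝ | ((p, q, u) : ℝ × ℝ × ℝ) ∈ S₁} := rfl
          rw [this]
          exact hfiber p q
  have hS₁top : volume S₁ = ⊤ := by
    rw [Measure.volume_eq_prod, Measure.prod_apply hS₁m]
    refine top_le_iff.1 ?_
    calc (⊤ : ENNReal) = ∫⁻ _ : ℝ, (⊤ : ENNReal) := by
          rw [lintegral_const, Real.volume_univ, ENNReal.top_mul_top]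
      _ ≤ ∫⁻ p : ℝ, (volume : Measure (ℝ × ℝ)) (Prod.mk p ⁻¹' S₁) := by
          refine lintegral_mono fun p => ?_
          rw [hslice2 p]
  rw [← hs'vol, hvolS₀, ← hvolS₁, hS₁top]

end SolLattice

/-- The centralizer of any lattice `Γ` in `Sol` is trivial. -/
theorem sol_centralizer_of_lattice_trivial (Γ : Subgroup Sol)
    (hdisc : DiscreteTopology Γ)
    (hvol : ∃ s : Set Sol, solHaar s < ⊤ ∧ ∀ g : Sol, ∃ γ ∈ Γ, γ * g ∈ s) :
    Subgroup.centralizer (Γ : Set Sol) = ⊥ := by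
  obtain ⟨ε, hε, hsep⟩ := SolLattice.exists_discreteness_radius Γ hdisc
  obtain ⟨s₀, hs₀fin, hs₀cov⟩ := hvol
  set s := MeasureTheory.toMeasurable solHaar s₀ with hs_def
  have hs : MeasurableSet s := MeasureTheory.measurableSet_toMeasurable _ _
  have hsfin : solHaar s < ⊤ := by
    rw [hs_def, MeasureTheory.measure_toMeasurable]; exact hs₀fin
  have hscov : ∀ g : Sol, ∃ γ ∈ Γ, γ * g ∈ s := by
    intro g
    obtain ⟨γ, hγ, hm⟩ := hs₀cov g
    exact ⟨γ, hγ, MeasureTheory.subset_toMeasurable _ _ hm⟩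
  rw [eq_bot_iff]
  intro g hg
  rw [Subgroup.mem_bot]
  by_contra hg1
  have hcomm := Subgroup.mem_centralizer_iff.1 hg
  have hxid : ∀ γ ∈ Γ, γ.x * (Real.exp g.t - 1) = g.x * (Real.exp γ.t - 1) := by
    intro γ hγ
    have h := congrArg Sol.x (hcomm γ hγ)
    simp only [Sol.mul_x] at h
    linear_combination -h
  have hyid : ∀ γ ∈ Γ, γ.y * (Real.exp (-g.t) - 1) = g.y * (Real.exp (-γ.t) - 1) := by
    intro γ hγ
    have h := congrArg Sol.y (hcomm γ hγ)
    simp only [Sol.mul_y] at h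
    linear_combination -h
  by_cases hgt : g.t = 0
  · -- plane case
    have hne : g.x ≠ 0 ∨ g.y ≠ 0 := by
      by_contra hcon
      push_neg at hcon
      exact hg1 (by ext <;> simp [hcon.1, hcon.2, hgt])
    have hΓt : ∀ γ ∈ Γ, γ.t = 0 := by
      intro γ hγ
      rcases hne with hx | hy
      · have h := hxid γ hγ
        rw [hgt] at h
        simp only [Real.exp_zero, sub_self, mul_zero] at h
        have h2 : Real.exp γ.t - 1 = 0 := by
          rcases mul_eq_zero.1 h.symm with h' | h'
          · exact absurd h' hx
          · exact h'
        have : Real.exp γ.t = 1 := by linarith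
        exact (Real.exp_eq_one_iff _).1 this
      · have h := hyid γ hγ
        rw [hgt] at h
        simp only [neg_zero, Real.exp_zero, sub_self, mul_zero] at h
        have h2 : Real.exp (-γ.t) - 1 = 0 := by
          rcases mul_eq_zero.1 h.symm with h' | h'
          · exact absurd h' hy
          · exact h'
        have h3 : Real.exp (-γ.t) = 1 := by linarith
        have := (Real.exp_eq_one_iff _).1 h3
        linarith
    exact absurd (SolLattice.plane_case Γ hε hsep hΓt hs hscov) (ne_of_lt hsfin)
  · -- curve case
    have hEg : Real.exp g.t - 1 ≠ 0 := by
      intro h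
      exact hgt ((Real.exp_eq_one_iff _).1 (by linarith))
    have hEg' : Real.exp (-g.t) - 1 ≠ 0 := by
      intro h
      have := (Real.exp_eq_one_iff _).1 (show Real.exp (-g.t) = 1 by linarith)
      exact hgt (by linarith)
    set c := g.x / (Real.exp g.t - 1) with hc_def
    set d := g.y / (Real.exp (-g.t) - 1) with hd_def
    have hγx : ∀ γ ∈ Γ, γ.x = c * (Real.exp γ.t - 1) := by
      intro γ hγ
      rw [hc_def, div_mul_eq_mul_div, eq_div_iff hEg]
      linear_combination hxid γ hγ
    have hγy : ∀ γ ∈ Γ, γ.y = d * (Real.exp (-γ.t) - 1) := by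
      intro γ hγ
      rw [hd_def, div_mul_eq_mul_div, eq_div_iff hEg']
      linear_combination hyid γ hγ
    have hcurve : ∀ γ ∈ Γ, γ = (⟨c * (Real.exp γ.t - 1), d * (Real.exp (-γ.t) - 1), γ.t⟩ : Sol) := by
      intro γ hγ
      ext
      · exact hγx γ hγ
      · exact hγy γ hγ
      · rfl
    set M := |c| + |d| + 1 with hM_def
    have hM : 0 < M := by positivity
    set δ := min 1 (min ε (ε / (2 * M))) with hδ_def
    have hδ : 0 < δ := by
      apply lt_min one_pos
      exact lt_min hε (by positivity)
    have hδε : δ ≤ ε := le_trans (min_le_right _ _) (min_le_left _ _)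
    have hsmall : ∀ τ : ℝ, |τ| < δ →
        |c * (Real.exp τ - 1)| < ε ∧ |d * (Real.exp (-τ) - 1)| < ε := by
      intro τ hτ
      have hτ1 : |τ| ≤ 1 := le_of_lt (lt_of_lt_of_le hτ (min_le_left _ _))
      have h1 : |Real.exp τ - 1| ≤ 2 * |τ| := Real.abs_exp_sub_one_le hτ1
      have h2 : |Real.exp (-τ) - 1| ≤ 2 * |τ| := by
        have := Real.abs_exp_sub_one_le (x := -τ) (by rwa [abs_neg])
        rwa [abs_neg] at this
      have hτM : |τ| < ε / (2 * M) :=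
        lt_of_lt_of_le hτ (le_trans (min_le_right _ _) (min_le_right _ _))
      have hkey : ∀ a : ℝ, |a| ≤ M - 1 → |a| * |Real.exp τ - 1| < ε ∧
          |a| * |Real.exp (-τ) - 1| < ε := by
        intro a ha
        have haM : |a| < M := by linarith
        have hstep : ∀ r : ℝ, |r| ≤ 2 * |τ| → |a| * |r| < ε := by
          intro r hr
          calc |a| * |r| ≤ M * |r| := mul_le_mul_of_nonneg_right (le_of_lt haM) (abs_nonneg r)
            _ ≤ M * (2 * |τ|) := mul_le_mul_of_nonneg_left hr (le_of_lt hM)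
            _ < M * (2 * (ε / (2 * M))) := by
                apply mul_lt_mul_of_pos_left _ hM
                linarith
            _ = ε := by field_simp
        exact ⟨hstep _ h1, hstep _ h2⟩
      have hcM : |c| ≤ M - 1 := by rw [hM_def]; linarith [abs_nonneg d]
      have hdM : |d| ≤ M - 1 := by rw [hM_def]; linarith [abs_nonneg c]
      rw [abs_mul, abs_mul]
      exact ⟨(hkey c hcM).1, (hkey d hdM).2⟩
    have hTsep : ∀ γ₁ ∈ Γ, ∀ γ₂ ∈ Γ, γ₁.t ≠ γ₂.t → δ ≤ |γ₁.t - γ₂.t| := by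
      intro γ₁ h₁ γ₂ h₂ hne
      by_contra hlt
      push_neg at hlt
      have hσΓ : γ₁ * γ₂⁻¹ ∈ Γ := mul_mem h₁ (inv_mem h₂)
      have hσt : (γ₁ * γ₂⁻¹).t = γ₁.t - γ₂.t := by simp [sub_eq_add_neg]
      have hσδ : |(γ₁ * γ₂⁻¹).t| < δ := by rw [hσt]; exact hlt
      obtain ⟨hcx, hcy⟩ := hsmall _ hσδ
      have hσ1 : γ₁ * γ₂⁻¹ = 1 := by
        refine hsep _ hσΓ ?_ ?_ (lt_of_lt_of_le hσδ hδε)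
        · rw [hγx _ hσΓ]; exact hcx
        · rw [hγy _ hσΓ]; exact hcy
      have : (γ₁ * γ₂⁻¹).t = 0 := by rw [hσ1]; rfl
      rw [hσt] at this
      exact hne (by linarith)
    exact absurd (SolLattice.curve_case Γ hδ c d hcurve hTsep hs hscov) (ne_of_lt hsfin)
end

section
/- For A ∈ SL₂(ℤ) with tr(A) > 2, the semidirect product Γ_A = ℤ² ⋊_A ℤ, realized as the group of matrices [[Aⁿ, Z],[0,1]] with n ∈ ℤ and Z ∈ ℤ², is a discrete, cocompact subgroup of the group S_A = {[[Aᵗ, W],[0,1]] : t ∈ ℝ, W ∈ ℝ²}, where Aᵗ is defined via real diagonalization of A. -/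
open scoped MatrixGroups

private lemma exp_gap_aux (l : ℝ) (m n : ℤ) (hmn : m ≠ n) :
    Real.exp ((n : ℝ) * l) * (1 - Real.exp (-|l|)) ≤
      |Real.exp ((m : ℝ) * l) - Real.exp ((n : ℝ) * l)| := by
  have key : Real.exp ((m:ℝ)*l) - Real.exp ((n:ℝ)*l)
      = Real.exp ((n:ℝ)*l) * (Real.exp (((m - n : ℤ):ℝ)*l) - 1) := by
    rw [mul_sub, ← Real.exp_add]; push_cast; ring_nf
  set k : ℤ := m - n with hk
  have hk0 : k ≠ 0 := sub_ne_zero.mpr hmn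
  have h1 : (1:ℝ) ≤ |(k:ℝ)| := by
    rw [← Int.cast_abs]; exact_mod_cast Int.one_le_abs hk0
  have habs : |l| ≤ |(k:ℝ)*l| := by
    rw [abs_mul]; nlinarith [abs_nonneg l]
  have hmain : 1 - Real.exp (-|l|) ≤ |Real.exp ((k:ℝ)*l) - 1| := by
    rcases le_abs.mp habs with h | h
    · have hle : Real.exp |l| ≤ Real.exp ((k:ℝ)*l) := Real.exp_le_exp.mpr h
      have h2 : Real.exp (-|l|) * Real.exp (|l|) = 1 := by rw [← Real.exp_add]; simp
      have h3 : 1 - Real.exp (-|l|) ≤ Real.exp |l| - 1 := by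
        nlinarith [Real.exp_pos |l|, sq_nonneg (Real.exp |l| - 1)]
      calc 1 - Real.exp (-|l|) ≤ Real.exp |l| - 1 := h3
        _ ≤ Real.exp ((k:ℝ)*l) - 1 := by linarith
        _ ≤ |Real.exp ((k:ℝ)*l) - 1| := le_abs_self _
    · have hle : Real.exp ((k:ℝ)*l) ≤ Real.exp (-|l|) := Real.exp_le_exp.mpr (by linarith)
      calc 1 - Real.exp (-|l|) ≤ 1 - Real.exp ((k:ℝ)*l) := by linarith
        _ ≤ |Real.exp ((k:ℝ)*l) - 1| := by rw [abs_sub_comm]; exact le_abs_self _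
  calc Real.exp ((n:ℝ)*l) * (1 - Real.exp (-|l|))
      ≤ Real.exp ((n:ℝ)*l) * |Real.exp ((k:ℝ)*l) - 1| := by
        have := Real.exp_pos ((n:ℝ)*l); nlinarith
    _ = |Real.exp ((m:ℝ)*l) - Real.exp ((n:ℝ)*l)| := by
        rw [key, abs_mul, abs_of_pos (Real.exp_pos _)]

/-- For `A ∈ SL₂(ℤ)` with `tr(A) > 2`, diagonalized over `ℝ` as
`B A B⁻¹ = diag(e^λ, e^{−λ})` (`λ ≠ 0`), define `Aᵗ = B⁻¹ diag(e^{tλ}, e^{−tλ}) B`.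
Then the semidirect product `Γ_A = ℤ² ⋊_A ℤ`, realized as the matrices
`[[Aⁿ, Z],[0,1]]` with `n ∈ ℤ`, `Z ∈ ℤ²`, is a discrete cocompact subgroup of
`S_A = {[[Aᵗ, W],[0,1]] : t ∈ ℝ, W ∈ ℝ²}`. -/
theorem sol_lattice_discrete_cocompact
    (A : Matrix (Fin 2) (Fin 2) ℤ) (hdet : A.det = 1) (htr : 2 < A.trace)
    (B : GL (Fin 2) ℝ) (l : ℝ) (hl : l ≠ 0)
    (hBA : (B : Matrix (Fin 2) (Fin 2) ℝ) * A.map Int.cast *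
        ((B⁻¹ : GL (Fin 2) ℝ) : Matrix (Fin 2) (Fin 2) ℝ) =
      !![Real.exp l, 0; 0, Real.exp (-l)])
    (Apow : ℝ → Matrix (Fin 2) (Fin 2) ℝ)
    (hApow : ∀ t : ℝ, Apow t =
      ((B⁻¹ : GL (Fin 2) ℝ) : Matrix (Fin 2) (Fin 2) ℝ) *
        !![Real.exp (t * l), 0; 0, Real.exp (-(t * l))] *
        (B : Matrix (Fin 2) (Fin 2) ℝ))
    (SA : Set (Matrix (Fin 2 ⊕ Fin 1) (Fin 2 ⊕ Fin 1) ℝ))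
    (hSA : SA = {M | ∃ (t : ℝ) (W : Matrix (Fin 2) (Fin 1) ℝ),
      M = Matrix.fromBlocks (Apow t) W 0 1})
    (ΓA : Set (Matrix (Fin 2 ⊕ Fin 1) (Fin 2 ⊕ Fin 1) ℝ))
    (hΓA : ΓA = {M | ∃ (n : ℤ) (Z : Matrix (Fin 2) (Fin 1) ℤ),
      M = Matrix.fromBlocks (Apow (n : ℝ)) (Z.map Int.cast) 0 1}) :
    ΓA ⊆ SA ∧ DiscreteTopology ↥ΓA ∧
      ∃ K : Set (Matrix (Fin 2 ⊕ Fin 1) (Fin 2 ⊕ Fin 1) ℝ),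
        K ⊆ SA ∧ IsCompact K ∧ ∀ g ∈ SA, ∃ k ∈ K, ∃ γ ∈ ΓA, g = k * γ := by

  set Bm : Matrix (Fin 2) (Fin 2) ℝ := (B : Matrix (Fin 2) (Fin 2) ℝ) with hBm
  set Bi : Matrix (Fin 2) (Fin 2) ℝ := ((B⁻¹ : GL (Fin 2) ℝ) : Matrix (Fin 2) (Fin 2) ℝ) with hBi
  have hBBi : Bm * Bi = 1 := by
    rw [hBm, hBi, ← Units.val_mul, mul_inv_cancel, Units.val_one]
  have hBiB : Bi * Bm = 1 := by
    rw [hBm, hBi, ← Units.val_mul, inv_mul_cancel, Units.val_one]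
  set D : ℝ → Matrix (Fin 2) (Fin 2) ℝ :=
    fun t => !![Real.exp (t * l), 0; 0, Real.exp (-(t * l))] with hDdef
  have hApow' : ∀ t, Apow t = Bi * D t * Bm := hApow
  -- D is multiplicative
  have hDmul : ∀ a b : ℝ, D a * D b = D (a + b) := by
    intro a b
    ext i j
    fin_cases i <;> fin_cases j <;>
      simp [hDdef, Matrix.mul_apply, Fin.sum_univ_two, ← Real.exp_add] <;> ring_nf
  have hApowmul : ∀ a b : ℝ, Apow a * Apow b = Apow (a + b) := by
    intro a b
    rw [hApow' a, hApow' b, hApow' (a + b), ← hDmul a b]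
    simp only [mul_assoc]
    rw [← mul_assoc Bm Bi, hBBi, one_mul]
  have hApow0 : Apow 0 = 1 := by
    rw [hApow' 0]
    have : D 0 = 1 := by
      simp [hDdef, ← Matrix.one_fin_two]
    rw [this, mul_one, hBiB]
  -- sandwich identity
  have hSand : ∀ X : Matrix (Fin 2) (Fin 2) ℝ, Bm * (Bi * X * Bm) * Bi = X := by
    intro X
    simp only [mul_assoc]
    rw [hBBi, mul_one, ← mul_assoc, hBBi, one_mul]
  have hBApowBi : ∀ t : ℝ, Bm * Apow t * Bi = D t := by
    intro t
    rw [hApow' t, ← mul_assoc, mul_assoc Bm (Bi * D t) Bm]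
    have := hSand (D t)
    rw [← mul_assoc] at this ⊢
    exact this
  -- continuity of Apow
  have hDc : Continuous D := by
    apply continuous_matrix
    intro i j
    fin_cases i <;> fin_cases j <;> simp [hDdef] <;> fun_prop
  have hApc : Continuous Apow := by
    have : Apow = fun t => Bi * D t * Bm := funext hApow'
    rw [this]
    exact (continuous_const.matrix_mul hDc).matrix_mul continuous_const
  -- Part 1 : ΓA ⊆ SA
  have hsub : ΓA ⊆ SA := by
    intro M hM
    rw [hΓA] at hM
    obtain ⟨n, Z, rfl⟩ := hM
    rw [hSA]
    exact ⟨(n : ℝ), Z.map Int.cast, rfl⟩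
  refine ⟨hsub, ?_, ?_⟩
  · -- DISCRETENESS
    rw [discreteTopology_iff_isOpen_singleton]
    rintro ⟨p, hp⟩
    rw [hΓA] at hp
    obtain ⟨n₀, Z₀, hp'⟩ := hp
    -- the detecting function
    set φ : Matrix (Fin 2 ⊕ Fin 1) (Fin 2 ⊕ Fin 1) ℝ → ℝ :=
      fun M => (Bm * (Matrix.of fun i j : Fin 2 => M (Sum.inl i) (Sum.inl j)) * Bi) 0 0
        with hφdef
    have hφcont : Continuous φ := by
      apply Continuous.matrix_elem
      apply Continuous.matrix_mul _ continuous_const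
      apply Continuous.matrix_mul continuous_const
      apply continuous_matrix
      intro i j
      exact continuous_id.matrix_elem (Sum.inl i) (Sum.inl j)
    have hφval : ∀ (m : ℝ) (W : Matrix (Fin 2) (Fin 1) ℝ),
        φ (Matrix.fromBlocks (Apow m) W 0 1) = Real.exp (m * l) := by
      intro m W
      have h1 : (Matrix.of fun i j : Fin 2 =>
          (Matrix.fromBlocks (Apow m) W 0 1 : Matrix (Fin 2 ⊕ Fin 1) (Fin 2 ⊕ Fin 1) ℝ)
            (Sum.inl i) (Sum.inl j)) = Apow m := by
        ext i j; simp [Matrix.fromBlocks_apply₁₁]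
      rw [hφdef]
      simp only [h1, hBApowBi m, hDdef]
      simp
    set ε₁ : ℝ := Real.exp ((n₀ : ℝ) * l) * (1 - Real.exp (-|l|)) with hε₁
    have hε₁pos : 0 < ε₁ := by
      apply mul_pos (Real.exp_pos _)
      have : Real.exp (-|l|) < 1 := Real.exp_lt_one_iff.mpr (neg_lt_zero.mpr (abs_pos.mpr hl))
      linarith
    -- the open set
    set U : Set (Matrix (Fin 2 ⊕ Fin 1) (Fin 2 ⊕ Fin 1) ℝ) :=
      φ ⁻¹' Metric.ball (φ p) ε₁ ∩
        ⋂ i : Fin 2, (fun M : Matrix (Fin 2 ⊕ Fin 1) (Fin 2 ⊕ Fin 1) ℝ =>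
          M (Sum.inl i) (Sum.inr 0)) ⁻¹' Metric.ball (p (Sum.inl i) (Sum.inr 0)) 1 with hU
    have hUopen : IsOpen U := by
      refine (Metric.isOpen_ball.preimage hφcont).inter ?_
      exact isOpen_iInter_of_finite fun i =>
        Metric.isOpen_ball.preimage (continuous_id.matrix_elem (Sum.inl i) (Sum.inr 0))
    rw [isOpen_induced_iff]
    refine ⟨U, hUopen, ?_⟩
    ext ⟨q, hq⟩
    simp only [Set.mem_preimage, Set.mem_singleton_iff, Subtype.ext_iff]
    constructor
    · intro hqU
      obtain ⟨hq1, hq2⟩ := hqU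
      rw [hΓA] at hq
      obtain ⟨m, Z', hq'⟩ := hq
      -- first coordinate : m = n₀
      have hφq : φ q = Real.exp ((m : ℝ) * l) := by rw [hq']; exact hφval _ _
      have hφp : φ p = Real.exp ((n₀ : ℝ) * l) := by rw [hp']; exact hφval _ _
      have hmn : m = n₀ := by
        by_contra hne
        have hgap := exp_gap_aux l m n₀ hne
        have hlt : |Real.exp ((m:ℝ)*l) - Real.exp ((n₀:ℝ)*l)| < ε₁ := by
          have := hq1
          rw [Set.mem_preimage, Metric.mem_ball, Real.dist_eq, hφq, hφp] at this
          exact this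
        rw [hε₁] at hlt
        linarith
      -- second coordinate : Z' = Z₀
      have hZ : Z' = Z₀ := by
        ext i j
        have hj : j = 0 := Subsingleton.elim j 0
        subst hj
        have hi := Set.mem_iInter.mp hq2 i
        rw [Set.mem_preimage, Metric.mem_ball, Real.dist_eq, hq', hp'] at hi
        simp only [Matrix.fromBlocks_apply₁₂, Matrix.map_apply] at hi
        have : |((Z' i 0 - Z₀ i 0 : ℤ) : ℝ)| < 1 := by push_cast; exact hi
        have h2 : |(Z' i 0 - Z₀ i 0 : ℤ)| < 1 := by exact_mod_cast this
        rw [abs_lt] at h2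
        omega
      rw [hq', hp', hmn, hZ]
    · rintro rfl
      constructor
      · rw [Set.mem_preimage, Metric.mem_ball, dist_self]; exact hε₁pos
      · refine Set.mem_iInter.mpr fun i => ?_
        rw [Set.mem_preimage, Metric.mem_ball, dist_self]; exact one_pos
  · -- COCOMPACTNESS
    set ψ : ℝ × ℝ × ℝ → Matrix (Fin 2 ⊕ Fin 1) (Fin 2 ⊕ Fin 1) ℝ :=
      fun p => Matrix.fromBlocks (Apow p.1) (Apow p.1 * !![p.2.1; p.2.2]) 0 1 with hψ
    have hψc : Continuous ψ := by
      have hFc : Continuous fun p : ℝ × ℝ × ℝ => (!![p.2.1; p.2.2] : Matrix (Fin 2) (Fin 1) ℝ) := by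
        apply continuous_matrix
        intro i j
        fin_cases i <;> fin_cases j <;> simp <;> fun_prop
      apply continuous_matrix
      intro i j
      cases i with
      | inl i =>
        cases j with
        | inl j =>
          simp only [hψ, Matrix.fromBlocks_apply₁₁]
          exact (hApc.comp continuous_fst).matrix_elem i j
        | inr j =>
          simp only [hψ, Matrix.fromBlocks_apply₁₂]
          exact ((hApc.comp continuous_fst).matrix_mul hFc).matrix_elem i j
      | inr i =>
        cases j with
        | inl j =>
          simp only [hψ, Matrix.fromBlocks_apply₂₁]
          exact continuous_const
        | inr j =>
          simp only [hψ, Matrix.fromBlocks_apply₂₂]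
          exact continuous_const
    set Kset := ψ '' (Set.Icc 0 1 ×ˢ Set.Icc 0 1 ×ˢ Set.Icc 0 1) with hK
    refine ⟨Kset, ?_, ?_, ?_⟩
    · -- K ⊆ SA
      rintro M ⟨⟨s, a, b⟩, _, rfl⟩
      rw [hSA]
      exact ⟨s, Apow s * !![a; b], rfl⟩
    · exact ((isCompact_Icc.prod (isCompact_Icc.prod isCompact_Icc)).image hψc)
    · -- decomposition
      intro g hg
      rw [hSA] at hg
      obtain ⟨t, W, rfl⟩ := hg
      set n : ℤ := ⌊t⌋ with hn
      set s : ℝ := t - n with hs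
      have hs01 : s ∈ Set.Icc (0:ℝ) 1 := by
        constructor
        · rw [hs]; have := Int.floor_le t; linarith
        · rw [hs]; have := Int.lt_floor_add_one t; linarith
      set Y : Matrix (Fin 2) (Fin 1) ℝ := Apow (-s) * W with hY
      set a : ℝ := Int.fract (Y 0 0) with ha
      set b : ℝ := Int.fract (Y 1 0) with hb
      set Z : Matrix (Fin 2) (Fin 1) ℤ := Matrix.of fun i _ => ⌊Y i 0⌋ with hZ
      have hfl : ∀ i : Fin 2, (⌊Y i 0⌋ : ℝ) + Int.fract (Y i 0) = Y i 0 :=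
        fun i => Int.floor_add_fract _
      have hZF : Z.map Int.cast + (!![a; b] : Matrix (Fin 2) (Fin 1) ℝ) = Y := by
        ext i j
        have hj : j = 0 := Subsingleton.elim j 0
        subst hj
        fin_cases i
        · simpa [hZ, ha, Matrix.map_apply] using hfl 0
        · simpa [hZ, hb, Matrix.map_apply] using hfl 1
      refine ⟨ψ (s, a, b), ⟨(s, a, b), ⟨hs01, ⟨Int.fract_nonneg _, (Int.fract_lt_one _).le⟩,
        ⟨Int.fract_nonneg _, (Int.fract_lt_one _).le⟩⟩, rfl⟩,
        Matrix.fromBlocks (Apow (n : ℝ)) (Z.map Int.cast) 0 1, ?_, ?_⟩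
      · rw [hΓA]; exact ⟨n, Z, rfl⟩
      · rw [hψ]
        simp only [Matrix.fromBlocks_multiply, Matrix.mul_zero, Matrix.zero_mul,
          Matrix.mul_one, Matrix.one_mul, add_zero, zero_add]
        have h1 : Apow s * Apow (n : ℝ) = Apow t := by
          rw [hApowmul]; congr 1; rw [hs]; ring
        have h2 : Apow s * (Z.map (Int.cast : ℤ → ℝ)) + Apow s * !![a; b] = W := by
          rw [← Matrix.mul_add, hZF, hY, ← Matrix.mul_assoc, hApowmul]
          have h0 : s + -s = 0 := by ring
          rw [h0, hApow0, Matrix.one_mul]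
        rw [h1, h2]
end

section
/- If Γ is a discrete subgroup of the solvable group S = ℝ² ⋊ ℝ (Sol), then the projection of Γ to S/[S,S] ≅ ℝ is a discrete subgroup of ℝ. -/
/-- From discreteness of `Γ`, extract an `ε`-neighborhood of the identity meeting `Γ` only in `1`. -/
lemma sol_exists_eps (Γ : Subgroup Sol) (hΓ : DiscreteTopology Γ) :
    ∃ ε > (0:ℝ), ∀ g ∈ Γ, |g.x| < ε → |g.y| < ε → |g.t| < ε → g = 1 := by
  have h1 : IsOpen ({1} : Set Γ) := isOpen_discrete _
  rw [isOpen_induced_iff] at h1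
  obtain ⟨U, hU, hU1⟩ := h1
  rw [isOpen_induced_iff] at hU
  obtain ⟨V, hV, hVU⟩ := hU
  have h0 : ((0:ℝ), (0:ℝ), (0:ℝ)) ∈ V := by
    have h1U : (1 : Sol) ∈ U := by
      have : (1 : Γ) ∈ Subtype.val ⁻¹' U := by rw [hU1]; rfl
      exact this
    rw [← hVU] at h1U
    simpa using h1U
  obtain ⟨ε, hε, hball⟩ := Metric.isOpen_iff.mp hV _ h0
  refine ⟨ε, hε, fun g hg hx hy ht => ?_⟩
  have hgV : (g.x, g.y, g.t) ∈ V := by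
    apply hball
    rw [Metric.mem_ball, Prod.dist_eq, Prod.dist_eq]
    simp only [Real.dist_eq, sub_zero]
    exact max_lt hx (max_lt hy ht)
  have hgU : g ∈ U := by rw [← hVU]; exact hgV
  have hmem : (⟨g, hg⟩ : Γ) ∈ Subtype.val ⁻¹' U := hgU
  rw [hU1] at hmem
  exact Subtype.ext_iff.mp hmem

/-- Key lemma: for a discrete `Γ ≤ Sol`, small `t`-values in `Γ` vanish. -/
lemma sol_key (Γ : Subgroup Sol) (hΓ : DiscreteTopology Γ) :
    ∃ δ > (0:ℝ), ∀ g ∈ Γ, |g.t| < δ → g.t = 0 := by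
  obtain ⟨ε, hε, hone⟩ := sol_exists_eps Γ hΓ
  by_contra hcon
  push_neg at hcon
  have hcon' : ∀ δ > (0:ℝ), ∃ g ∈ Γ, |g.t| < δ ∧ g.t ≠ 0 := by
    intro δ hδ
    obtain ⟨g, hg, hgt, hgt0⟩ := hcon δ hδ
    exact ⟨g, hg, hgt, hgt0⟩
  by_cases hN : ∃ n ∈ Γ, n.t = 0 ∧ n ≠ 1
  · -- Case A: there is a nontrivial element of Γ ∩ ℝ²
    obtain ⟨n, hnΓ, hnt, hn1⟩ := hN
    set M : ℝ := 2 * (|n.x| + |n.y| + 1) with hM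
    have hM0 : 0 < M := by positivity
    obtain ⟨g, hgΓ, hgt, hgt0⟩ := hcon' (min 1 (ε / M)) (by positivity)
    set τ := g.t with hτ
    have hτ1 : |τ| ≤ 1 := le_of_lt (lt_of_lt_of_le hgt (min_le_left _ _))
    have hτε : |τ| < ε / M := lt_of_lt_of_le hgt (min_le_right _ _)
    set c := g * n * g⁻¹ * n⁻¹ with hc
    have hcΓ : c ∈ Γ := mul_mem (mul_mem (mul_mem hgΓ hnΓ) (inv_mem hgΓ)) (inv_mem hnΓ)
    have hct : c.t = 0 := by simp [hc, hnt]
    have he : Real.exp τ * Real.exp (-τ) = 1 := by rw [← Real.exp_add]; simp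
    have hcx : c.x = (Real.exp τ - 1) * n.x := by
      simp [hc, hnt]
      linear_combination (-g.x) * he
    have hcy : c.y = (Real.exp (-τ) - 1) * n.y := by
      simp [hc, hnt]
      linear_combination (-g.y) * he
    have hex : |Real.exp τ - 1| ≤ 2 * |τ| := Real.abs_exp_sub_one_le hτ1
    have hey : |Real.exp (-τ) - 1| ≤ 2 * |τ| := by
      have := Real.abs_exp_sub_one_le (x := -τ) (by rwa [abs_neg])
      rwa [abs_neg] at this
    have hbx : |c.x| < ε := by
      rw [hcx, abs_mul]
      have h1 : |Real.exp τ - 1| * |n.x| ≤ 2 * |τ| * |n.x| :=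
        mul_le_mul_of_nonneg_right hex (abs_nonneg _)
      have h2 : 2 * |τ| * |n.x| < ε := by
        have : |τ| * M < ε := (lt_div_iff₀ hM0).mp hτε
        nlinarith [abs_nonneg τ, abs_nonneg n.x, abs_nonneg n.y]
      linarith
    have hby : |c.y| < ε := by
      rw [hcy, abs_mul]
      have h1 : |Real.exp (-τ) - 1| * |n.y| ≤ 2 * |τ| * |n.y| :=
        mul_le_mul_of_nonneg_right hey (abs_nonneg _)
      have h2 : 2 * |τ| * |n.y| < ε := by
        have : |τ| * M < ε := (lt_div_iff₀ hM0).mp hτε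
        nlinarith [abs_nonneg τ, abs_nonneg n.x, abs_nonneg n.y]
      linarith
    have hc1 : c = 1 := hone c hcΓ hbx hby (by rw [hct, abs_zero]; exact hε)
    have hexp1 : Real.exp τ ≠ 1 := fun h => hgt0 ((Real.exp_eq_one_iff τ).mp h)
    have hexp1' : Real.exp (-τ) ≠ 1 := fun h => hgt0 (by
      have := (Real.exp_eq_one_iff (-τ)).mp h; linarith)
    have hnx : n.x = 0 := by
      have : (Real.exp τ - 1) * n.x = 0 := by rw [← hcx, hc1]; simp
      rcases mul_eq_zero.mp this with h | h
      · exact absurd (by linarith : Real.exp τ = 1) hexp1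
      · exact h
    have hny : n.y = 0 := by
      have : (Real.exp (-τ) - 1) * n.y = 0 := by rw [← hcy, hc1]; simp
      rcases mul_eq_zero.mp this with h | h
      · exact absurd (by linarith : Real.exp (-τ) = 1) hexp1'
      · exact h
    exact hn1 (by ext <;> simp [hnx, hny, hnt])
  · -- Case B: Γ ∩ ℝ² = {1}, so Γ is abelian
    push_neg at hN
    obtain ⟨a, haΓ, _, hat0⟩ := hcon' 1 one_pos
    set τ := a.t with hτ
    set A : ℝ := |Real.exp τ - 1| with hA
    set B : ℝ := |Real.exp (-τ) - 1| with hB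
    have hA0 : 0 < A := by
      rw [hA, abs_pos, sub_ne_zero]
      exact fun h => hat0 ((Real.exp_eq_one_iff τ).mp h)
    have hB0 : 0 < B := by
      rw [hB, abs_pos, sub_ne_zero]
      intro h
      exact hat0 (by have := (Real.exp_eq_one_iff (-τ)).mp h; linarith)
    set m : ℝ := min A B with hm
    have hm0 : 0 < m := lt_min hA0 hB0
    set M : ℝ := 2 * (|a.x| + |a.y| + 1) with hM
    have hM0 : 0 < M := by positivity
    obtain ⟨g, hgΓ, hgt, hgt0⟩ := hcon' (min 1 (min ε (ε * m / M))) (by positivity)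
    set s := g.t with hs
    have hs1 : |s| ≤ 1 := le_of_lt (lt_of_lt_of_le hgt (min_le_left _ _))
    have hsε : |s| < ε := lt_of_lt_of_le hgt (le_trans (min_le_right _ _) (min_le_left _ _))
    have hsm : |s| < ε * m / M :=
      lt_of_lt_of_le hgt (le_trans (min_le_right _ _) (min_le_right _ _))
    -- commutator is trivial, so a and g commute
    have hcomm : a * g = g * a := by
      have hcΓ : a * g * a⁻¹ * g⁻¹ ∈ Γ :=
        mul_mem (mul_mem (mul_mem haΓ hgΓ) (inv_mem haΓ)) (inv_mem hgΓ)
      have hct : (a * g * a⁻¹ * g⁻¹).t = 0 := by simp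
      have hc1 : a * g * a⁻¹ * g⁻¹ = 1 := hN _ hcΓ hct
      have : (a * g) * (g * a)⁻¹ = 1 := by
        rw [mul_inv_rev]
        rw [show (a * g) * (a⁻¹ * g⁻¹) = a * g * a⁻¹ * g⁻¹ by group]
        exact hc1
      exact mul_inv_eq_one.mp this
    have hxeq : g.x * (Real.exp τ - 1) = a.x * (Real.exp s - 1) := by
      have := congrArg Sol.x hcomm
      simp at this
      linear_combination this
    have hyeq : g.y * (Real.exp (-τ) - 1) = a.y * (Real.exp (-s) - 1) := by
      have := congrArg Sol.y hcomm
      simp at this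
      linear_combination this
    have hexs : |Real.exp s - 1| ≤ 2 * |s| := Real.abs_exp_sub_one_le hs1
    have heys : |Real.exp (-s) - 1| ≤ 2 * |s| := by
      have := Real.abs_exp_sub_one_le (x := -s) (by rwa [abs_neg])
      rwa [abs_neg] at this
    have hsM : |s| * M < ε * m := by
      calc |s| * M < (ε * m / M) * M := mul_lt_mul_of_pos_right hsm hM0
        _ = ε * m := by field_simp
    have hgx : |g.x| < ε := by
      have h1 : |g.x| * A = |a.x| * |Real.exp s - 1| := by
        rw [hA, ← abs_mul, ← abs_mul, hxeq]
      have h2 : |a.x| * |Real.exp s - 1| ≤ |a.x| * (2 * |s|) :=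
        mul_le_mul_of_nonneg_left hexs (abs_nonneg _)
      have h3 : |a.x| * (2 * |s|) ≤ |s| * M := by
        rw [hM]; nlinarith [abs_nonneg a.x, abs_nonneg a.y, abs_nonneg s]
      have h4 : |g.x| * A < ε * m := by linarith
      have h5 : ε * m ≤ ε * A := by
        apply mul_le_mul_of_nonneg_left (min_le_left _ _) (le_of_lt hε)
      have : |g.x| * A < ε * A := lt_of_lt_of_le h4 h5
      exact lt_of_mul_lt_mul_right this (le_of_lt hA0) |>.trans_le (le_refl _)
    have hgy : |g.y| < ε := by
      have h1 : |g.y| * B = |a.y| * |Real.exp (-s) - 1| := by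
        rw [hB, ← abs_mul, ← abs_mul, hyeq]
      have h2 : |a.y| * |Real.exp (-s) - 1| ≤ |a.y| * (2 * |s|) :=
        mul_le_mul_of_nonneg_left heys (abs_nonneg _)
      have h3 : |a.y| * (2 * |s|) ≤ |s| * M := by
        rw [hM]; nlinarith [abs_nonneg a.x, abs_nonneg a.y, abs_nonneg s]
      have h4 : |g.y| * B < ε * m := by linarith
      have h5 : ε * m ≤ ε * B := by
        apply mul_le_mul_of_nonneg_left (min_le_right _ _) (le_of_lt hε)
      have : |g.y| * B < ε * B := lt_of_lt_of_le h4 h5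
      exact lt_of_mul_lt_mul_right this (le_of_lt hB0)
    refine hgt0 ?_
    have h1 : g = 1 := hone g hgΓ hgx hgy hsε
    rw [hs, h1]
    simp

/-- The projection of a discrete subgroup of `Sol` to
`Sol/[Sol,Sol] ≅ ℝ`, `(x,y,t) ↦ t`, has discrete image in `ℝ`. -/
theorem sol_discrete_projection (Γ : Subgroup Sol) (hΓ : DiscreteTopology Γ) :
    DiscreteTopology ↥{r : ℝ | ∃ g ∈ Γ, Sol.t g = r} := by
  obtain ⟨δ, hδ0, hkey⟩ := sol_key Γ hΓ
  rw [discreteTopology_iff_isOpen_singleton]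
  rintro ⟨r, hr⟩
  have hset : ({⟨r, hr⟩} : Set ↥{r : ℝ | ∃ g ∈ Γ, Sol.t g = r})
      = Subtype.val ⁻¹' Metric.ball r δ := by
    ext ⟨r', hr'⟩
    simp only [Set.mem_singleton_iff, Set.mem_preimage, Metric.mem_ball, Real.dist_eq,
      Subtype.mk_eq_mk]
    constructor
    · rintro rfl; simpa using hδ0
    · intro h
      obtain ⟨g, hg, hgr⟩ := hr
      obtain ⟨g', hg', hgr'⟩ := hr'
      have hmem : g' * g⁻¹ ∈ Γ := mul_mem hg' (inv_mem hg)
      have ht : (g' * g⁻¹).t = r' - r := by simp [hgr, hgr']; ring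
      have := hkey _ hmem (by rw [ht]; exact h)
      rw [ht] at this
      linarith
  rw [hset]
  exact Metric.isOpen_ball.preimage continuous_subtype_val
end

section
/- Every lattice L in the real Heisenberg group H_ℝ is generated by three elements (u,r), (v,s) and the central element (0,0,λ/n), where u,v∈ℝ² are linearly independent with (u,0)×(v,0) = (0,0,λ), r,s ∈ ℝ, and n ∈ ℕ; conversely, any such group is a lattice in H_ℝ. -/
/-- The real Heisenberg group `H_ℝ`: coordinates `(x,y,z)` corresponding to the
upper unitriangular matrix `[[1,x,z],[0,1,y],[0,0,1]]`, with multiplication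
`(x,y,z)(u,v,w) = (x+u, y+v, z+w+x*v)`. -/
@[ext] structure Heisenberg : Type where
  x : ℝ
  y : ℝ
  z : ℝ

namespace Heisenberg

instance : Mul Heisenberg :=
  ⟨fun a b => ⟨a.x + b.x, a.y + b.y, a.z + b.z + a.x * b.y⟩⟩

instance : One Heisenberg := ⟨⟨0, 0, 0⟩⟩

instance : Inv Heisenberg := ⟨fun a => ⟨-a.x, -a.y, -a.z + a.x * a.y⟩⟩

@[simp] lemma mul_x (a b : Heisenberg) : (a * b).x = a.x + b.x := rfl
@[simp] lemma mul_y (a b : Heisenberg) : (a * b).y = a.y + b.y := rfl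
@[simp] lemma mul_z (a b : Heisenberg) : (a * b).z = a.z + b.z + a.x * b.y := rfl
@[simp] lemma one_x : (1 : Heisenberg).x = 0 := rfl
@[simp] lemma one_y : (1 : Heisenberg).y = 0 := rfl
@[simp] lemma one_z : (1 : Heisenberg).z = 0 := rfl
@[simp] lemma inv_x (a : Heisenberg) : (a⁻¹).x = -a.x := rfl
@[simp] lemma inv_y (a : Heisenberg) : (a⁻¹).y = -a.y := rfl
@[simp] lemma inv_z (a : Heisenberg) : (a⁻¹).z = -a.z + a.x * a.y := rfl

instance : Group Heisenberg where
  mul := (· * ·)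
  one := 1
  inv := (·⁻¹)
  mul_assoc a b c := by ext <;> simp <;> ring
  one_mul a := by ext <;> simp
  mul_one a := by ext <;> simp
  inv_mul_cancel a := by ext <;> simp <;> ring

end Heisenberg

/-- Topology on the Heisenberg group, induced from its global coordinates in `ℝ³`. -/
instance : TopologicalSpace Heisenberg :=
  TopologicalSpace.induced (fun g => (g.x, g.y, g.z)) inferInstance


namespace Heisenberg

/-- Coordinates as an equivalence with `ℝ³`. -/
def coords : Heisenberg ≃ ℝ × ℝ × ℝ where
  toFun g := (g.x, g.y, g.z)
  invFun t := ⟨t.1, t.2.1, t.2.2⟩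
  left_inv g := rfl
  right_inv t := rfl

lemma inducing_coords : Topology.IsInducing coords := ⟨rfl⟩

/-- Coordinates as a homeomorphism with `ℝ³`. -/
def homeo : Heisenberg ≃ₜ ℝ × ℝ × ℝ := coords.toHomeomorphOfIsInducing inducing_coords

lemma continuous_x : Continuous fun g : Heisenberg => g.x :=
  continuous_fst.comp inducing_coords.continuous

lemma continuous_y : Continuous fun g : Heisenberg => g.y :=
  (continuous_fst.comp continuous_snd).comp inducing_coords.continuous

lemma continuous_z : Continuous fun g : Heisenberg => g.z :=
  (continuous_snd.comp continuous_snd).comp inducing_coords.continuous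

instance : T2Space Heisenberg :=
  (Topology.IsEmbedding.mk inducing_coords coords.injective).t2Space

lemma continuous_mk {α : Type*} [TopologicalSpace α] {f g h : α → ℝ}
    (hf : Continuous f) (hg : Continuous g) (hh : Continuous h) :
    Continuous fun a => (⟨f a, g a, h a⟩ : Heisenberg) := by
  apply inducing_coords.continuous_iff.2
  exact hf.prodMk (hg.prodMk hh)

instance : IsTopologicalGroup Heisenberg where
  continuous_mul := by
    have hx1 : Continuous fun p : Heisenberg × Heisenberg => p.1.x :=
      continuous_x.comp continuous_fst
    have hx2 : Continuous fun p : Heisenberg × Heisenberg => p.2.x :=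
      continuous_x.comp continuous_snd
    have hy1 : Continuous fun p : Heisenberg × Heisenberg => p.1.y :=
      continuous_y.comp continuous_fst
    have hy2 : Continuous fun p : Heisenberg × Heisenberg => p.2.y :=
      continuous_y.comp continuous_snd
    have hz1 : Continuous fun p : Heisenberg × Heisenberg => p.1.z :=
      continuous_z.comp continuous_fst
    have hz2 : Continuous fun p : Heisenberg × Heisenberg => p.2.z :=
      continuous_z.comp continuous_snd
    exact continuous_mk (hx1.add hx2) (hy1.add hy2) ((hz1.add hz2).add (hx1.mul hy2))
  continuous_inv :=
    continuous_mk continuous_x.neg continuous_y.neg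
      (continuous_z.neg.add (continuous_x.mul continuous_y))


/-- Central elements. -/
def cen (t : ℝ) : Heisenberg := ⟨0, 0, t⟩

@[simp] lemma cen_x (t : ℝ) : (cen t).x = 0 := rfl
@[simp] lemma cen_y (t : ℝ) : (cen t).y = 0 := rfl
@[simp] lemma cen_z (t : ℝ) : (cen t).z = t := rfl

@[simp] lemma cen_zero : cen 0 = 1 := rfl

lemma cen_mul (s t : ℝ) : cen s * cen t = cen (s + t) := by
  ext <;> simp [cen]

lemma cen_comm (t : ℝ) (g : Heisenberg) : g * cen t = cen t * g := by
  ext <;> simp [cen] <;> ring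

@[simp] lemma cen_inv (t : ℝ) : (cen t)⁻¹ = cen (-t) := by
  ext <;> simp [cen]

lemma cen_zpow (t : ℝ) (m : ℤ) : cen t ^ m = cen (m * t) := by
  induction m using Int.induction_on with
  | zero => simp
  | succ k ih => rw [zpow_add_one, ih, cen_mul]; congr 1; push_cast; ring
  | pred k ih => rw [zpow_sub_one, ih, cen_inv, cen_mul]; congr 1; push_cast; ring

lemma eq_cen_of_xy {g : Heisenberg} (hx : g.x = 0) (hy : g.y = 0) : g = cen g.z := by
  ext <;> simp [cen, hx, hy]

/-- The commutator of any two elements is central, given by the determinant. -/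
lemma commutator_eq (a b : Heisenberg) :
    a * b * a⁻¹ * b⁻¹ = cen (a.x * b.y - a.y * b.x) := by
  ext <;> simp [cen] <;> ring

lemma mul_comm_cen (a b : Heisenberg) :
    b * a = a * b * cen (b.x * a.y - a.x * b.y) := by
  ext <;> simp [cen] <;> ring

lemma zpow_x (a : Heisenberg) (m : ℤ) : (a ^ m).x = m * a.x := by
  induction m using Int.induction_on with
  | zero => simp
  | succ k ih => rw [zpow_add_one, mul_x, ih]; push_cast; ring
  | pred k ih => rw [zpow_sub_one, mul_x, ih, inv_x]; push_cast; ring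

lemma zpow_y (a : Heisenberg) (m : ℤ) : (a ^ m).y = m * a.y := by
  induction m using Int.induction_on with
  | zero => simp
  | succ k ih => rw [zpow_add_one, mul_y, ih]; push_cast; ring
  | pred k ih => rw [zpow_sub_one, mul_y, ih, inv_y]; push_cast; ring


lemma zpow_z (a : Heisenberg) (m : ℤ) :
    (a ^ m).z = m * a.z + (m * (m - 1)) / 2 * (a.x * a.y) := by
  induction m using Int.induction_on with
  | zero => simp
  | succ k ih => rw [zpow_add_one, mul_z, ih, zpow_x]; push_cast; ring
  | pred k ih => rw [zpow_sub_one, mul_z, ih, zpow_x, inv_y, inv_z]; push_cast; ring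

lemma key_mul (A B : Heisenberg) (p q p' q' : ℤ) (w w' : ℝ) :
    (A ^ p * B ^ q * cen w) * (A ^ p' * B ^ q' * cen w')
      = A ^ (p + p') * B ^ (q + q') *
          cen (w + w' - (q * p') * (A.x * B.y - A.y * B.x)) := by
  ext <;> simp [cen, zpow_x, zpow_y, zpow_z] <;> push_cast <;> ring

lemma key_inv (A B : Heisenberg) (p q : ℤ) (w : ℝ) :
    (A ^ p * B ^ q * cen w)⁻¹
      = A ^ (-p) * B ^ (-q) * cen (-w - (q * p) * (A.x * B.y - A.y * B.x)) := by
  ext <;> simp [cen, zpow_x, zpow_y, zpow_z] <;> push_cast <;> ring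

/-- Normal form for the subgroup generated by `A`, `B` and a central element. -/
lemma closure_eq_normal (A B : Heisenberg) {n : ℕ} (hn : 0 < n) :
    (Subgroup.closure {A, B, cen ((A.x * B.y - A.y * B.x) / n)} : Set Heisenberg)
      = {g | ∃ p q m : ℤ,
          g = A ^ p * B ^ q * cen (m * ((A.x * B.y - A.y * B.x) / n))} := by
  have hn0 : (n : ℝ) ≠ 0 := Nat.cast_ne_zero.2 hn.ne'
  set lam : ℝ := A.x * B.y - A.y * B.x with hlam
  set mu : ℝ := lam / n with hmu
  have hnmu : (n : ℝ) * mu = lam := by rw [hmu]; field_simp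
  let S : Subgroup Heisenberg :=
    { carrier := {g | ∃ p q m : ℤ, g = A ^ p * B ^ q * cen (m * mu)}
      one_mem' := ⟨0, 0, 0, by simp⟩
      mul_mem' := by
        rintro g h ⟨p, q, m₁, rfl⟩ ⟨p', q', m₂, rfl⟩
        refine ⟨p + p', q + q', m₁ + m₂ - q * p' * n, ?_⟩
        rw [key_mul, ← hlam]
        congr 1
        push_cast
        rw [← hnmu]
        ring
      inv_mem' := by
        rintro g ⟨p, q, m, rfl⟩
        refine ⟨-p, -q, -m - q * p * n, ?_⟩
        rw [key_inv, ← hlam]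
        congr 1
        push_cast
        rw [← hnmu]
        ring }
  have hle : Subgroup.closure {A, B, cen mu} ≤ S := by
    rw [Subgroup.closure_le]
    rintro g (rfl | rfl | rfl)
    · exact ⟨1, 0, 0, by simp⟩
    · exact ⟨0, 1, 0, by simp⟩
    · exact ⟨0, 0, 1, by simp⟩
  have hge : ∀ g ∈ S, g ∈ Subgroup.closure {A, B, cen mu} := by
    rintro g ⟨p, q, m, rfl⟩
    have hA : A ∈ Subgroup.closure {A, B, cen mu} :=
      Subgroup.subset_closure (by simp)
    have hB : B ∈ Subgroup.closure {A, B, cen mu} :=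
      Subgroup.subset_closure (by simp)
    have hC : cen mu ∈ Subgroup.closure {A, B, cen mu} :=
      Subgroup.subset_closure (by simp)
    rw [show m * mu = (m : ℝ) * mu from rfl, ← cen_zpow]
    exact mul_mem (mul_mem (zpow_mem hA p) (zpow_mem hB q)) (zpow_mem hC m)
  ext g
  exact ⟨fun hg => hle hg, fun hg => hge g hg⟩

lemma int_eq_zero_of_abs_lt {p : ℤ} (h : |(p : ℝ)| < 1) : p = 0 := by
  by_contra hp
  have := Int.one_le_abs (by omega : p ≠ 0)
  have : (1 : ℝ) ≤ |(p : ℝ)| := by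
    rw [← Int.cast_abs]; exact_mod_cast this
  linarith

lemma exists_int_mod (c w : ℝ) (hc : c ≠ 0) :
    ∃ m : ℤ, 0 ≤ w - m * c ∧ w - m * c < |c| := by
  rcases lt_or_gt_of_ne hc with hneg | hpos
  · have hc' : (0:ℝ) < -c := by linarith
    have hw : w / (-c) * (-c) = w := div_mul_cancel₀ w hc'.ne'
    refine ⟨-⌊w / (-c)⌋, ?_, ?_⟩
    · have h1 : (⌊w / (-c)⌋ : ℝ) ≤ w / (-c) := Int.floor_le _
      push_cast
      linarith [mul_le_mul_of_nonneg_right h1 hc'.le]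
    · have h2 : w / (-c) < ⌊w / (-c)⌋ + 1 := Int.lt_floor_add_one _
      rw [abs_of_neg hneg]
      push_cast
      linarith [mul_lt_mul_of_pos_right h2 hc']
  · have hw : w / c * c = w := div_mul_cancel₀ w hpos.ne'
    refine ⟨⌊w / c⌋, ?_, ?_⟩
    · have h1 : (⌊w / c⌋ : ℝ) ≤ w / c := Int.floor_le _
      linarith [mul_le_mul_of_nonneg_right h1 hpos.le]
    · have h2 : w / c < ⌊w / c⌋ + 1 := Int.lt_floor_add_one _
      rw [abs_of_pos hpos]
      linarith [mul_lt_mul_of_pos_right h2 hpos]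

lemma discrete_of_isolated {G : Type*} [Group G] [TopologicalSpace G] [IsTopologicalGroup G]
    (L : Subgroup G) (U : Set G) (hU : IsOpen U) (h1 : (1 : G) ∈ U)
    (hiso : ∀ γ ∈ L, γ ∈ U → γ = 1) (s : Set G) (hs : s ⊆ L) : DiscreteTopology s := by
  rw [discreteTopology_iff_isOpen_singleton]
  rintro ⟨γ, hγ⟩
  have hkey : ({⟨γ, hγ⟩} : Set s) = Subtype.val ⁻¹' ((fun x => γ⁻¹ * x) ⁻¹' U) := by
    ext ⟨δ, hδ⟩
    simp only [Set.mem_singleton_iff, Set.mem_preimage, Subtype.mk_eq_mk]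
    constructor
    · rintro rfl; simpa using h1
    · intro hmem
      have h0 := hiso (γ⁻¹ * δ) (mul_mem (inv_mem (hs hγ)) (hs hδ)) hmem
      have : γ * (γ⁻¹ * δ) = γ * 1 := by rw [h0]
      simpa [mul_assoc] using this
  rw [hkey]
  exact ((hU.preimage (continuous_const.mul continuous_id)).preimage continuous_subtype_val)


section Backward

/-- Integer combinations of an independent pair are uniformly separated from zero. -/
lemma small_comb_eq_zero {u v : ℝ × ℝ} (hlam : u.1 * v.2 - u.2 * v.1 ≠ 0) :
    ∃ ε > 0, ∀ p q : ℤ, |p * u.1 + q * v.1| < ε → |p * u.2 + q * v.2| < ε →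
      p = 0 ∧ q = 0 := by
  set lam := u.1 * v.2 - u.2 * v.1 with hlamdef
  set M : ℝ := |u.1| + |u.2| + |v.1| + |v.2| + 1 with hM
  have hMpos : (0:ℝ) < M := by
    have := abs_nonneg u.1; have := abs_nonneg u.2
    have := abs_nonneg v.1; have := abs_nonneg v.2
    simp only [hM]; linarith
  have hlampos : 0 < |lam| := abs_pos.2 hlam
  refine ⟨|lam| / M, by positivity, fun p q hX hY => ?_⟩
  set X : ℝ := p * u.1 + q * v.1
  set Y : ℝ := p * u.2 + q * v.2
  have habs : ∀ (a b c d : ℝ), |a * b - c * d| ≤ |a| * |b| + |c| * |d| := by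
    intro a b c d
    calc |a * b - c * d| ≤ |a * b| + |c * d| := abs_sub _ _
    _ = |a| * |b| + |c| * |d| := by rw [abs_mul, abs_mul]
  constructor
  · have hid : (p : ℝ) * lam = X * v.2 - Y * v.1 := by
      simp only [hlamdef, X, Y]; push_cast; ring
    have h1 : |(p:ℝ)| * |lam| ≤ |X| * |v.2| + |Y| * |v.1| := by
      rw [← abs_mul, hid]; exact habs _ _ _ _
    have h2 : |X| * |v.2| + |Y| * |v.1| < |lam| := by
      have e1 : |X| * |v.2| ≤ |lam| / M * |v.2| :=
        mul_le_mul_of_nonneg_right hX.le (abs_nonneg _)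
      have e2 : |Y| * |v.1| ≤ |lam| / M * |v.1| :=
        mul_le_mul_of_nonneg_right hY.le (abs_nonneg _)
      have e3 : |lam| / M * (|v.2| + |v.1|) < |lam| / M * M := by
        apply mul_lt_mul_of_pos_left _ (by positivity)
        have := abs_nonneg u.1; have := abs_nonneg u.2
        simp only [hM]; linarith
      have e4 : |lam| / M * M = |lam| := div_mul_cancel₀ _ hMpos.ne'
      nlinarith
    apply int_eq_zero_of_abs_lt
    have h3 : |(p:ℝ)| * |lam| < 1 * |lam| := by
      rw [one_mul]; exact lt_of_le_of_lt h1 h2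
    exact (mul_lt_mul_iff_left₀ hlampos).mp h3
  · have hid : (q : ℝ) * lam = Y * u.1 - X * u.2 := by
      simp only [hlamdef, X, Y]; push_cast; ring
    have h1 : |(q:ℝ)| * |lam| ≤ |Y| * |u.1| + |X| * |u.2| := by
      rw [← abs_mul, hid]; exact habs _ _ _ _
    have h2 : |Y| * |u.1| + |X| * |u.2| < |lam| := by
      have e1 : |Y| * |u.1| ≤ |lam| / M * |u.1| :=
        mul_le_mul_of_nonneg_right hY.le (abs_nonneg _)
      have e2 : |X| * |u.2| ≤ |lam| / M * |u.2| :=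
        mul_le_mul_of_nonneg_right hX.le (abs_nonneg _)
      have e3 : |lam| / M * (|u.1| + |u.2|) < |lam| / M * M := by
        apply mul_lt_mul_of_pos_left _ (by positivity)
        have := abs_nonneg v.1; have := abs_nonneg v.2
        simp only [hM]; linarith
      have e4 : |lam| / M * M = |lam| := div_mul_cancel₀ _ hMpos.ne'
      nlinarith
    apply int_eq_zero_of_abs_lt
    have h3 : |(q:ℝ)| * |lam| < 1 * |lam| := by
      rw [one_mul]; exact lt_of_le_of_lt h1 h2
    exact (mul_lt_mul_iff_left₀ hlampos).mp h3

end Backward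

lemma lattice_of_generators (L : Subgroup Heisenberg) (u v : ℝ × ℝ) (r s : ℝ) (n : ℕ)
    (hn : 0 < n) (hlam : u.1 * v.2 - u.2 * v.1 ≠ 0)
    (hL : L = Subgroup.closure
      {⟨u.1, u.2, r⟩, ⟨v.1, v.2, s⟩, ⟨0, 0, (u.1 * v.2 - u.2 * v.1) / n⟩}) :
    DiscreteTopology L ∧
      ∃ K : Set Heisenberg, IsCompact K ∧ ∀ g : Heisenberg, ∃ k ∈ K, ∃ γ ∈ L, g = k * γ := by
  have hn0 : (n : ℝ) ≠ 0 := Nat.cast_ne_zero.2 hn.ne'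
  set A : Heisenberg := ⟨u.1, u.2, r⟩ with hA
  set B : Heisenberg := ⟨v.1, v.2, s⟩ with hB
  set lam : ℝ := u.1 * v.2 - u.2 * v.1 with hlamdef
  set mu : ℝ := lam / n with hmu
  have hmu0 : mu ≠ 0 := div_ne_zero hlam hn0
  have hABlam : A.x * B.y - A.y * B.x = lam := rfl
  have hmem : ∀ g : Heisenberg, g ∈ L ↔ ∃ p q m : ℤ, g = A ^ p * B ^ q * cen (m * mu) := by
    intro g
    have h1 : g ∈ L ↔ g ∈ (Subgroup.closure {A, B, cen ((A.x * B.y - A.y * B.x) / n)} :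
        Set Heisenberg) := by
      rw [hL]; rfl
    rw [h1, closure_eq_normal A B hn]
    simp only [Set.mem_setOf_eq, hABlam, ← hmu]
  have hcoord : ∀ (p q m : ℤ),
      (A ^ p * B ^ q * cen (m * mu)).x = p * u.1 + q * v.1 ∧
      (A ^ p * B ^ q * cen (m * mu)).y = p * u.2 + q * v.2 := by
    intro p q m
    constructor
    · simp [zpow_x, hA, hB]
    · simp [zpow_y, hA, hB]
  obtain ⟨ε₁, hε₁, hsep⟩ := small_comb_eq_zero hlam
  set ε : ℝ := min ε₁ |mu| with hε
  have hεpos : 0 < ε := lt_min hε₁ (abs_pos.2 hmu0)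
  constructor
  · -- discreteness
    set U : Set Heisenberg := {g | |g.x| < ε ∧ |g.y| < ε ∧ |g.z| < ε} with hU
    have hUopen : IsOpen U := by
      have h1 : U = (fun g : Heisenberg => g.x) ⁻¹' (Set.Ioo (-ε) ε) ∩
          ((fun g : Heisenberg => g.y) ⁻¹' (Set.Ioo (-ε) ε) ∩
           (fun g : Heisenberg => g.z) ⁻¹' (Set.Ioo (-ε) ε)) := by
        ext g
        simp [hU, Set.mem_Ioo, abs_lt, and_assoc]
      rw [h1]
      exact (isOpen_Ioo.preimage continuous_x).inter
        ((isOpen_Ioo.preimage continuous_y).inter (isOpen_Ioo.preimage continuous_z))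
    have h1U : (1 : Heisenberg) ∈ U := by simp [hU, hεpos]
    have hiso : ∀ γ ∈ L, γ ∈ U → γ = 1 := by
      intro γ hγ hγU
      obtain ⟨p, q, m, rfl⟩ := (hmem γ).1 hγ
      obtain ⟨hx, hy⟩ := hcoord p q m
      obtain ⟨h1, h2, h3⟩ := hγU
      rw [hx] at h1
      rw [hy] at h2
      obtain ⟨rfl, rfl⟩ := hsep p q (lt_of_lt_of_le h1 (min_le_left _ _))
        (lt_of_lt_of_le h2 (min_le_left _ _))
      simp only [zpow_zero, one_mul] at h3 ⊢
      have hm : m = 0 := by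
        apply int_eq_zero_of_abs_lt
        have h4 : |(m : ℝ)| * |mu| < 1 * |mu| := by
          rw [one_mul, ← abs_mul]
          have h5 : |(m : ℝ) * mu| < ε := by simpa using h3
          exact lt_of_lt_of_le h5 (min_le_right _ _)
        exact (mul_lt_mul_iff_left₀ (abs_pos.2 hmu0)).mp h4
      simp [hm]
    exact discrete_of_isolated L U hUopen h1U hiso _ le_rfl
  · -- cocompactness
    refine ⟨(fun t : ℝ × ℝ × ℝ => (⟨t.1 * u.1 + t.2.1 * v.1, t.1 * u.2 + t.2.1 * v.2,
        t.2.2⟩ : Heisenberg)) ''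
        (Set.Icc 0 1 ×ˢ Set.Icc 0 1 ×ˢ Set.Icc 0 |mu|), ?_, ?_⟩
    · apply IsCompact.image
      · exact isCompact_Icc.prod (isCompact_Icc.prod isCompact_Icc)
      · exact continuous_mk
          ((continuous_fst.mul continuous_const).add
            ((continuous_fst.comp continuous_snd).mul continuous_const))
          ((continuous_fst.mul continuous_const).add
            ((continuous_fst.comp continuous_snd).mul continuous_const))
          (continuous_snd.comp continuous_snd)
    · intro g
      set α : ℝ := (g.x * v.2 - g.y * v.1) / lam with hα
      set β : ℝ := (g.y * u.1 - g.x * u.2) / lam with hβ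
      have hgx : α * u.1 + β * v.1 = g.x := by
        rw [hα, hβ]; field_simp; ring
      have hgy : α * u.2 + β * v.2 = g.y := by
        rw [hα, hβ]; field_simp; ring
      set p : ℤ := ⌊α⌋ with hp
      set q : ℤ := ⌊β⌋ with hq
      set γ₀ : Heisenberg := A ^ p * B ^ q with hγ₀
      set w : ℝ := (g * γ₀⁻¹).z with hw
      obtain ⟨m, hm0, hm1⟩ := exists_int_mod mu w hmu0
      set γ : Heisenberg := γ₀ * cen (m * mu) with hγdef
      have hγL : γ ∈ L := (hmem γ).2 ⟨p, q, m, rfl⟩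
      refine ⟨g * γ⁻¹, ?_, γ, hγL, (inv_mul_cancel_right g γ).symm⟩
      have hksplit : g * γ⁻¹ = (g * γ₀⁻¹) * cen (-(m * mu)) := by
        rw [hγdef, mul_inv_rev, cen_inv, ← mul_assoc, cen_comm, mul_assoc, cen_comm]
      refine ⟨(α - p, β - q, w - m * mu), ?_, ?_⟩
      · refine ⟨⟨?_, ?_⟩, ⟨?_, ?_⟩, hm0, hm1.le⟩
        · simp only [sub_nonneg]; exact Int.floor_le α
        · have := Int.lt_floor_add_one α; push_cast; linarith
        · simp only [sub_nonneg]; exact Int.floor_le β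
        · have := Int.lt_floor_add_one β; push_cast; linarith
      · rw [hksplit]
        ext
        · show (α - p) * u.1 + (β - q) * v.1 = _
          simp only [mul_x, cen_x, mul_inv_rev, add_zero]
          have : (γ₀⁻¹).x = -(p * u.1 + q * v.1) := by
            simp [hγ₀, zpow_x, hA, hB]
          rw [this]
          linarith [hgx]
        · show (α - p) * u.2 + (β - q) * v.2 = _
          simp only [mul_y, cen_y, add_zero]
          have : (γ₀⁻¹).y = -(p * u.2 + q * v.2) := by
            simp [hγ₀, zpow_y, hA, hB]
          rw [this]
          linarith [hgy]
        · show w - m * mu = _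
          simp only [mul_z, cen_z, cen_x, cen_y, mul_zero, add_zero, hw]
          ring
  

section Forward

lemma exists_isolation (L : Subgroup Heisenberg) (hdisc : DiscreteTopology L) :
    ∃ ε > 0, ∀ γ ∈ L, |γ.x| < ε → |γ.y| < ε → |γ.z| < ε → γ = 1 := by
  have hopen : IsOpen ({1} : Set L) := isOpen_discrete _
  rw [isOpen_induced_iff] at hopen
  obtain ⟨U, hUopen, hUeq⟩ := hopen
  have h1U : (1 : Heisenberg) ∈ U := by
    have : ((1 : L) : Heisenberg) ∈ U := by
      have : (1 : L) ∈ (Subtype.val ⁻¹' U : Set L) := by rw [hUeq]; rfl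
      exact this
    simpa using this
  have hU1 : ∀ γ ∈ L, γ ∈ U → γ = 1 := by
    intro γ hγ hγU
    have : (⟨γ, hγ⟩ : L) ∈ (Subtype.val ⁻¹' U : Set L) := hγU
    rw [hUeq] at this
    simpa using congrArg Subtype.val this
  rw [isOpen_induced_iff] at hUopen
  obtain ⟨V, hVopen, hVeq⟩ := hUopen
  have h0V : ((0 : ℝ), (0 : ℝ), (0 : ℝ)) ∈ V := by
    have h2 : (1 : Heisenberg) ∈ (fun g : Heisenberg => (g.x, g.y, g.z)) ⁻¹' V := by
      rw [hVeq]; exact h1U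
    exact h2
  obtain ⟨ε, hε, hball⟩ := Metric.isOpen_iff.1 hVopen _ h0V
  refine ⟨ε, hε, fun γ hγ hx hy hz => ?_⟩
  apply hU1 γ hγ
  rw [← hVeq]
  apply hball
  rw [Metric.mem_ball]
  show dist ((γ.x, γ.y, γ.z) : ℝ × ℝ × ℝ) ((0:ℝ), (0:ℝ), (0:ℝ)) < ε
  rw [Prod.dist_eq, Prod.dist_eq]
  simp only [Real.dist_eq, sub_zero]
  exact max_lt hx (max_lt hy hz)

end Forward


lemma exists_indep_pair (L : Subgroup Heisenberg) (K : Set Heisenberg) (hK : IsCompact K)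
    (hcov : ∀ g : Heisenberg, ∃ k ∈ K, ∃ γ ∈ L, g = k * γ) :
    ∃ a ∈ L, ∃ b ∈ L, a.x * b.y - a.y * b.x ≠ 0 := by
  by_contra hcon
  push_neg at hcon
  -- find a nonzero vector orthogonal to all projections of L
  obtain ⟨w1, w2, hW, hperp⟩ : ∃ w1 w2 : ℝ, 0 < w1 ^ 2 + w2 ^ 2 ∧
      ∀ γ ∈ L, γ.x * w1 + γ.y * w2 = 0 := by
    by_cases hz : ∀ γ ∈ L, γ.x = 0 ∧ γ.y = 0
    · exact ⟨1, 0, by norm_num, fun γ hγ => by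
        obtain ⟨h1, h2⟩ := hz γ hγ; rw [h1, h2]; ring⟩
    · push_neg at hz
      obtain ⟨γ₀, hγ₀, hne⟩ := hz
      refine ⟨-γ₀.y, γ₀.x, ?_, ?_⟩
      · rcases imp_iff_not_or.mp hne with h | h
        · push_neg at h
          nlinarith [sq_nonneg γ₀.x, sq_nonneg γ₀.y, sq_abs γ₀.x, abs_pos.2 h]
        · nlinarith [sq_nonneg γ₀.y, abs_pos.2 h, sq_abs γ₀.y]
      · intro γ hγ
        have := hcon γ₀ hγ₀ γ hγ
        nlinarith [this]
  set f : Heisenberg → ℝ := fun g => g.x * w1 + g.y * w2 with hf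
  have hfc : Continuous f := (continuous_x.mul continuous_const).add
    (continuous_y.mul continuous_const)
  obtain ⟨k₁, hk₁, _, _, _⟩ := hcov 1
  obtain ⟨k₀, hk₀, hbd'⟩ := hK.exists_isMaxOn ⟨k₁, hk₁⟩
    ((continuous_abs.comp hfc).continuousOn)
  have hbd : ∀ k ∈ K, |f k| ≤ |f k₀| := fun k hk => hbd' hk
  set M : ℝ := |f k₀| with hM
  have hM0 : 0 ≤ M := abs_nonneg _
  set g : Heisenberg := ⟨(M + 1) / (w1 ^ 2 + w2 ^ 2) * w1,
    (M + 1) / (w1 ^ 2 + w2 ^ 2) * w2, 0⟩ with hg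
  have hfg : f g = M + 1 := by
    show (M + 1) / (w1 ^ 2 + w2 ^ 2) * w1 * w1 + (M + 1) / (w1 ^ 2 + w2 ^ 2) * w2 * w2 = M + 1
    field_simp
  obtain ⟨k, hk, γ, hγ, hgk⟩ := hcov g
  have : f g = f k + (γ.x * w1 + γ.y * w2) := by
    rw [hgk]; show (k * γ).x * w1 + (k * γ).y * w2 = _; simp; ring
  rw [hperp γ hγ, add_zero] at this
  have h1 : |f k| ≤ M := hbd k hk
  have h2 : f k ≤ |f k| := le_abs_self _
  rw [hfg] at this
  linarith [this ▸ h2]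


lemma isOpen_box (ε : ℝ) :
    IsOpen {g : Heisenberg | |g.x| < ε ∧ |g.y| < ε ∧ |g.z| < ε} := by
  have h1 : {g : Heisenberg | |g.x| < ε ∧ |g.y| < ε ∧ |g.z| < ε}
      = (fun g : Heisenberg => g.x) ⁻¹' (Set.Ioo (-ε) ε) ∩
        ((fun g : Heisenberg => g.y) ⁻¹' (Set.Ioo (-ε) ε) ∩
         (fun g : Heisenberg => g.z) ⁻¹' (Set.Ioo (-ε) ε)) := by
    ext g
    simp [Set.mem_Ioo, abs_lt, and_assoc]
  rw [h1]
  exact (isOpen_Ioo.preimage continuous_x).inter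
    ((isOpen_Ioo.preimage continuous_y).inter (isOpen_Ioo.preimage continuous_z))

lemma proj_isolation (L : Subgroup Heisenberg) (hdisc : DiscreteTopology L)
    {c : ℝ} (hc : c ≠ 0) (hcL : ∀ m : ℤ, cen (m * c) ∈ L) :
    ∃ ε > 0, ∀ γ ∈ L, |γ.x| < ε → |γ.y| < ε → γ.x = 0 ∧ γ.y = 0 := by
  obtain ⟨ε₀, hε₀, hiso⟩ := exists_isolation L hdisc
  set U : Set Heisenberg := {g | |g.x| < ε₀ ∧ |g.y| < ε₀ ∧ |g.z| < ε₀} with hUdef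
  have hUopen : IsOpen U := isOpen_box ε₀
  have hU1 : ∀ η ∈ L, η ∈ U → η = 1 := fun η hη ⟨h1, h2, h3⟩ => hiso η hη h1 h2 h3
  set Box : Set Heisenberg := (fun g : Heisenberg => (g.x, g.y, g.z)) ⁻¹'
    (Set.Icc (-1 : ℝ) 1 ×ˢ Set.Icc (-1 : ℝ) 1 ×ˢ Set.Icc 0 |c|) with hBoxdef
  have hBox : IsCompact Box := by
    have heq : Box = homeo ⁻¹'
        (Set.Icc (-1 : ℝ) 1 ×ˢ Set.Icc (-1 : ℝ) 1 ×ˢ Set.Icc 0 |c|) := rfl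
    rw [heq]
    exact homeo.isCompact_preimage.2
      (isCompact_Icc.prod (isCompact_Icc.prod isCompact_Icc))
  set F : Set Heisenberg := (L : Set Heisenberg) ∩ Box with hFdef
  have hFfin : F.Finite := by
    by_contra hinf
    have hF : F.Infinite := hinf
    obtain ⟨x, hxB, hacc⟩ :=
      hF.exists_accPt_of_subset_isCompact hBox Set.inter_subset_right
    have hcont : Continuous fun p : Heisenberg × Heisenberg => p.1⁻¹ * p.2 :=
      (continuous_inv.comp continuous_fst).mul continuous_snd
    have hT : IsOpen ((fun p : Heisenberg × Heisenberg => p.1⁻¹ * p.2) ⁻¹' U) :=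
      hUopen.preimage hcont
    have hxxT : (x, x) ∈ ((fun p : Heisenberg × Heisenberg => p.1⁻¹ * p.2) ⁻¹' U) := by
      show x⁻¹ * x ∈ U
      rw [inv_mul_cancel]
      exact ⟨by simpa using hε₀, by simpa using hε₀, by simpa using hε₀⟩
    obtain ⟨W1, W2, hW1, hW2, hxW1, hxW2, hsub⟩ := isOpen_prod_iff.1 hT x x hxxT
    have hWnhds : W1 ∩ W2 ∈ nhds x := (hW1.inter hW2).mem_nhds ⟨hxW1, hxW2⟩
    obtain ⟨γ, ⟨hγW, hγF⟩, hγx⟩ := accPt_iff_nhds.1 hacc _ hWnhds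
    have hne : IsOpen {y : Heisenberg | y ≠ γ} := isOpen_ne
    have hWnhds2 : (W1 ∩ W2) ∩ {y | y ≠ γ} ∈ nhds x :=
      ((hW1.inter hW2).inter hne).mem_nhds ⟨⟨hxW1, hxW2⟩, Ne.symm hγx⟩
    obtain ⟨δ, ⟨⟨hδW, hδne⟩, hδF⟩, _⟩ := accPt_iff_nhds.1 hacc _ hWnhds2
    have hmem : γ⁻¹ * δ ∈ U := hsub (show (γ, δ) ∈ W1 ×ˢ W2 from ⟨hγW.1, hδW.2⟩)
    have h1 : γ⁻¹ * δ = 1 := hU1 _ (mul_mem (inv_mem hγF.1) hδF.1) hmem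
    exact hδne (by simpa [eq_comm] using (inv_mul_eq_one.1 h1))
  -- construction of a representative in F
  have hδconstr : ∀ γ ∈ L, |γ.x| ≤ 1 → |γ.y| ≤ 1 →
      ∃ δ ∈ F, δ.x = γ.x ∧ δ.y = γ.y := by
    intro γ hγ hx hy
    obtain ⟨m, hm0, hm1⟩ := exists_int_mod c γ.z hc
    refine ⟨γ * cen ((↑(-m : ℤ) : ℝ) * c), ⟨mul_mem hγ (hcL (-m)), ?_⟩, by simp, by simp⟩
    simp only [hBoxdef, Set.mem_preimage, Set.prodMk_mem_set_prod_eq, Set.mem_Icc,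
      mul_x, mul_y, mul_z, cen_x, cen_y, cen_z, add_zero, mul_zero]
    push_cast
    obtain ⟨hx1, hx2⟩ := abs_le.1 hx
    obtain ⟨hy1, hy2⟩ := abs_le.1 hy
    refine ⟨⟨hx1, hx2⟩, ⟨hy1, hy2⟩, by linarith, by linarith⟩
  set Fp : Set Heisenberg := {δ ∈ F | δ.x ≠ 0 ∨ δ.y ≠ 0} with hFpdef
  have hFpfin : Fp.Finite := hFfin.subset (Set.sep_subset _ _)
  have main : ∀ ε' > 0, (∀ δ ∈ Fp, ε' ≤ max |δ.x| |δ.y|) → ε' ≤ 1 →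
      ∀ γ ∈ L, |γ.x| < ε' → |γ.y| < ε' → γ.x = 0 ∧ γ.y = 0 := by
    intro ε' hε' hlb hle γ hγ hx hy
    obtain ⟨δ, hδF, hδx, hδy⟩ := hδconstr γ hγ (hx.le.trans hle) (hy.le.trans hle)
    by_contra hne
    have hδFp : δ ∈ Fp := ⟨hδF, by
      rw [hδx, hδy]
      rcases not_and_or.1 hne with h | h
      · exact Or.inl h
      · exact Or.inr h⟩
    have := hlb δ hδFp
    rw [hδx, hδy] at this
    rcases max_cases |γ.x| |γ.y| with ⟨heq, _⟩ | ⟨heq, _⟩ <;> rw [heq] at this <;> linarith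
  rcases Set.eq_empty_or_nonempty Fp with hem | hne
  · refine ⟨1, one_pos, main 1 one_pos (fun δ hδ => by rw [hem] at hδ; exact hδ.elim) le_rfl⟩
  · obtain ⟨δ₀, hδ₀, hmin⟩ :=
      Set.exists_min_image Fp (fun δ => max |δ.x| |δ.y|) hFpfin hne
    have hm₀ : 0 < max |δ₀.x| |δ₀.y| := by
      rcases hδ₀.2 with h | h
      · exact lt_max_of_lt_left (abs_pos.2 h)
      · exact lt_max_of_lt_right (abs_pos.2 h)
    refine ⟨min 1 (max |δ₀.x| |δ₀.y|), lt_min one_pos hm₀,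
      main _ (lt_min one_pos hm₀) (fun δ hδ => (min_le_right _ _).trans (hmin δ hδ))
        (min_le_left _ _)⟩


set_option maxHeartbeats 1000000 in
lemma generators_of_lattice (L : Subgroup Heisenberg) (hdisc : DiscreteTopology L)
    (K : Set Heisenberg) (hK : IsCompact K)
    (hcov : ∀ g : Heisenberg, ∃ k ∈ K, ∃ γ ∈ L, g = k * γ) :
    ∃ (u v : ℝ × ℝ) (r s : ℝ) (n : ℕ), 0 < n ∧ u.1 * v.2 - u.2 * v.1 ≠ 0 ∧
      L = Subgroup.closure
        {⟨u.1, u.2, r⟩, ⟨v.1, v.2, s⟩, ⟨0, 0, (u.1 * v.2 - u.2 * v.1) / n⟩} := by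
  classical
  obtain ⟨ε₀, hε₀, hiso⟩ := exists_isolation L hdisc
  -- the central subgroup
  set Zc : AddSubgroup ℝ :=
    { carrier := {t | cen t ∈ L}
      zero_mem' := by
        show cen 0 ∈ L
        rw [cen_zero]; exact L.one_mem
      add_mem' := by
        intro t₁ t₂ h₁ h₂
        show cen (t₁ + t₂) ∈ L
        rw [← cen_mul]; exact mul_mem h₁ h₂
      neg_mem' := by
        intro t h
        show cen (-t) ∈ L
        rw [← cen_inv]; exact inv_mem h } with hZcdef
  have hZcmem : ∀ t : ℝ, t ∈ Zc ↔ cen t ∈ L := fun t => Iff.rfl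
  -- an independent pair gives a nontrivial central element
  obtain ⟨a, haL, b, hbL, hab⟩ := exists_indep_pair L K hK hcov
  have hlam₀ : a.x * b.y - a.y * b.x ∈ Zc := by
    rw [hZcmem, ← commutator_eq]
    exact mul_mem (mul_mem (mul_mem haL hbL) (inv_mem haL)) (inv_mem hbL)
  -- Zc is not dense
  have hnotdense : ¬ Dense (Zc : Set ℝ) := by
    intro hd
    obtain ⟨t, htZc, hdist⟩ := hd.exists_dist_lt (ε₀ / 2) (ε := ε₀ / 2) (by linarith)
    rw [Real.dist_eq, abs_lt] at hdist
    have ht : cen t ∈ L := htZc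
    have h1 : cen t = 1 :=
      hiso _ ht (by simpa using hε₀) (by simpa using hε₀)
        (by rw [cen_z, abs_lt]; constructor <;> linarith)
    have : t = 0 := by
      have := congrArg Heisenberg.z h1
      simpa using this
    linarith
  obtain ⟨c, hcc⟩ := (AddSubgroup.dense_or_cyclic Zc).resolve_left hnotdense
  have hZc : ∀ t : ℝ, t ∈ Zc ↔ ∃ k : ℤ, t = k * c := by
    intro t
    rw [hcc, AddSubgroup.mem_closure_singleton]
    constructor
    · rintro ⟨k, hk⟩; exact ⟨k, by rw [← hk, zsmul_eq_mul]⟩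
    · rintro ⟨k, hk⟩; exact ⟨k, by rw [zsmul_eq_mul, hk]⟩
  have hc0 : c ≠ 0 := by
    rintro rfl
    obtain ⟨k, hk⟩ := (hZc _).1 hlam₀
    rw [mul_zero] at hk
    exact hab hk
  have hcL : ∀ m : ℤ, cen (m * c) ∈ L := fun m => (hZcmem _).1 ((hZc _).2 ⟨m, rfl⟩)
  -- the projected subgroup
  set P₀ : AddSubgroup (ℝ × ℝ) :=
    { carrier := {w | ∃ γ ∈ L, (γ.x, γ.y) = w}
      zero_mem' := ⟨1, L.one_mem, rfl⟩
      add_mem' := by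
        rintro w w' ⟨γ, hγ, rfl⟩ ⟨δ, hδ, rfl⟩
        exact ⟨γ * δ, mul_mem hγ hδ, rfl⟩
      neg_mem' := by
        rintro w ⟨γ, hγ, rfl⟩
        exact ⟨γ⁻¹, inv_mem hγ, by simp [Prod.ext_iff]⟩ } with hP₀def
  set P : Submodule ℤ (ℝ × ℝ) := AddSubgroup.toIntSubmodule P₀ with hPdef
  have hPmem : ∀ w : ℝ × ℝ, w ∈ P ↔ ∃ γ ∈ L, (γ.x, γ.y) = w := fun w => Iff.rfl
  obtain ⟨εP, hεP, hprojiso⟩ := proj_isolation L hdisc hc0 hcL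
  haveI hPdisc : DiscreteTopology P := by
    rw [discreteTopology_iff_isOpen_singleton]
    rintro ⟨w, hw⟩
    have hset : ({⟨w, hw⟩} : Set P) = Subtype.val ⁻¹' (Metric.ball w εP) := by
      ext ⟨w', hw'⟩
      simp only [Set.mem_singleton_iff, Set.mem_preimage, Subtype.mk_eq_mk, Metric.mem_ball]
      constructor
      · rintro rfl; simpa using hεP
      · intro hd
        obtain ⟨γ, hγ, hγeq⟩ := (hPmem _).1 (sub_mem hw' hw)
        have hdx : dist w' w = max |w'.1 - w.1| |w'.2 - w.2| := by
          rw [Prod.dist_eq, Real.dist_eq, Real.dist_eq]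
        have hγx : γ.x = w'.1 - w.1 := congrArg Prod.fst hγeq
        have hγy : γ.y = w'.2 - w.2 := congrArg Prod.snd hγeq
        have h1 : |γ.x| < εP := by
          rw [hγx]; exact lt_of_le_of_lt (le_max_left _ _) (hdx ▸ hd)
        have h2 : |γ.y| < εP := by
          rw [hγy]; exact lt_of_le_of_lt (le_max_right _ _) (hdx ▸ hd)
        obtain ⟨hx0, hy0⟩ := hprojiso γ hγ h1 h2
        rw [hγx] at hx0
        rw [hγy] at hy0
        have : w' = w := by
          ext
          · linarith [hx0]
          · linarith [hy0]
        exact this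
    rw [hset]
    exact Metric.isOpen_ball.preimage continuous_subtype_val
  haveI hPlat : IsZLattice ℝ P := by
    constructor
    rw [Submodule.eq_top_iff']
    intro w
    set lam₀ : ℝ := a.x * b.y - a.y * b.x with hlam₀def
    have hu₀ : ((a.x, a.y) : ℝ × ℝ) ∈ P := (hPmem _).2 ⟨a, haL, rfl⟩
    have hv₀ : ((b.x, b.y) : ℝ × ℝ) ∈ P := (hPmem _).2 ⟨b, hbL, rfl⟩
    have hw : w = ((w.1 * b.y - w.2 * b.x) / lam₀) • ((a.x, a.y) : ℝ × ℝ)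
        + ((w.2 * a.x - w.1 * a.y) / lam₀) • ((b.x, b.y) : ℝ × ℝ) := by
      have := hab
      ext
      · show w.1 = _ * a.x + _ * b.x
        field_simp
        ring
      · show w.2 = _ * a.y + _ * b.y
        field_simp
        ring
    rw [hw]
    exact Submodule.add_mem _
      (Submodule.smul_mem _ _ (Submodule.subset_span hu₀))
      (Submodule.smul_mem _ _ (Submodule.subset_span hv₀))
  haveI hPfin : Module.Finite ℤ P := ZLattice.module_finite ℝ P
  haveI hPfree : Module.Free ℤ P := ZLattice.module_free ℝ P
  have hrank : Module.finrank ℤ P = 2 := by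
    rw [ZLattice.rank ℝ P]
    simp [Module.finrank_prod, Module.finrank_self]
  set B2 : Module.Basis (Fin 2) ℤ P := (Module.finBasis ℤ P).reindex (finCongr hrank) with hB2
  set bR : Module.Basis (Fin 2) ℝ (ℝ × ℝ) := Module.Basis.ofZLatticeBasis ℝ P B2 with hbR
  have hbase : ∀ i, bR i = ((B2 i : P) : ℝ × ℝ) := fun i => B2.ofZLatticeBasis_apply ℝ P i
  set u : ℝ × ℝ := ((B2 0 : P) : ℝ × ℝ) with hu
  set v : ℝ × ℝ := ((B2 1 : P) : ℝ × ℝ) with hv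
  -- the determinant is nonzero
  have hlamne : u.1 * v.2 - u.2 * v.1 ≠ 0 := by
    intro hl0
    have hli := Fintype.linearIndependent_iff.1 bR.linearIndependent
    have h01 : ∀ α β : ℝ, α * u.1 + β * v.1 = 0 → α * u.2 + β * v.2 = 0 → α = 0 ∧ β = 0 := by
      intro α β hcomp1 hcomp2
      have hsum : ∑ i : Fin 2, (![α, β] : Fin 2 → ℝ) i • bR i = 0 := by
        rw [Fin.sum_univ_two]
        simp only [Matrix.cons_val_zero, Matrix.cons_val_one, Matrix.head_cons,
          hbase 0, hbase 1, ← hu, ← hv]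
        ext
        · show α * u.1 + β * v.1 = 0
          exact hcomp1
        · show α * u.2 + β * v.2 = 0
          exact hcomp2
      have := hli ![α, β] hsum
      exact ⟨this 0, this 1⟩
    obtain ⟨hv1, hu1⟩ := h01 v.1 (-u.1) (by ring) (by nlinarith [hl0])
    obtain ⟨hv2, hu2⟩ := h01 v.2 (-u.2) (by nlinarith [hl0]) (by ring)
    have hu0 : u = 0 := by
      ext
      · simpa using hu1
      · simpa using hu2
    exact bR.ne_zero 0 (by rw [hbase 0, ← hu, hu0])
  -- representatives
  obtain ⟨a', ha'L, ha'eq⟩ := (hPmem u).1 (B2 0).2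
  obtain ⟨b', hb'L, hb'eq⟩ := (hPmem v).1 (B2 1).2
  have ha'x : a'.x = u.1 := congrArg Prod.fst ha'eq
  have ha'y : a'.y = u.2 := congrArg Prod.snd ha'eq
  have hb'x : b'.x = v.1 := congrArg Prod.fst hb'eq
  have hb'y : b'.y = v.2 := congrArg Prod.snd hb'eq
  set lam : ℝ := u.1 * v.2 - u.2 * v.1 with hlamdef
  have hlamZc : lam ∈ Zc := by
    rw [hZcmem]
    have : a' * b' * a'⁻¹ * b'⁻¹ = cen lam := by
      rw [commutator_eq, ha'x, ha'y, hb'x, hb'y]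
    rw [← this]
    exact mul_mem (mul_mem (mul_mem ha'L hb'L) (inv_mem ha'L)) (inv_mem hb'L)
  obtain ⟨N, hN⟩ := (hZc lam).1 hlamZc
  have hN0 : N ≠ 0 := by
    rintro rfl
    rw [Int.cast_zero, zero_mul] at hN
    exact hlamne hN
  set n : ℕ := N.natAbs with hn
  have hnpos : 0 < n := Int.natAbs_pos.2 hN0
  set mu : ℝ := lam / n with hmu
  have hNcast : ((n : ℝ)) = |(N : ℝ)| := by
    rw [hn, Nat.cast_natAbs, Int.cast_abs]
  obtain ⟨e, he1, hmuec⟩ : ∃ e : ℤ, (e = 1 ∨ e = -1) ∧ mu = e * c := by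
    rcases hN0.lt_or_gt with hNneg | hNpos
    · refine ⟨-1, Or.inr rfl, ?_⟩
      have h1 : |(N : ℝ)| = -(N : ℝ) := abs_of_neg (by exact_mod_cast hNneg)
      have hNne : (N : ℝ) ≠ 0 := Int.cast_ne_zero.2 hN0
      rw [hmu, hN, hNcast, h1, div_neg, mul_div_cancel_left₀ c hNne]
      push_cast
      ring
    · refine ⟨1, Or.inl rfl, ?_⟩
      have h1 : |(N : ℝ)| = (N : ℝ) := abs_of_pos (by exact_mod_cast hNpos)
      have hNne : (N : ℝ) ≠ 0 := Int.cast_ne_zero.2 hN0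
      rw [hmu, hN, hNcast, h1, mul_div_cancel_left₀ c hNne]
      push_cast
      ring
  have hmuZc : mu ∈ Zc := (hZc mu).2 ⟨e, by rw [hmuec]⟩
  have hmumem : cen mu ∈ L := (hZcmem _).1 hmuZc
  have hZcmu : ∀ t ∈ Zc, ∃ m : ℤ, t = m * mu := by
    intro t ht
    obtain ⟨k, hk⟩ := (hZc t).1 ht
    refine ⟨k * e, ?_⟩
    have he2 : (e : ℝ) * e = 1 := by
      rcases he1 with rfl | rfl <;> norm_num
    rw [hk, hmuec]
    push_cast
    calc (k : ℝ) * c = k * (e * e) * c := by rw [he2]; ring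
    _ = k * e * (e * c) := by ring
  refine ⟨u, v, a'.z, b'.z, n, hnpos, hlamne, ?_⟩
  have hrw1 : (⟨u.1, u.2, a'.z⟩ : Heisenberg) = a' := by
    ext
    · exact ha'x.symm
    · exact ha'y.symm
    · rfl
  have hrw2 : (⟨v.1, v.2, b'.z⟩ : Heisenberg) = b' := by
    ext
    · exact hb'x.symm
    · exact hb'y.symm
    · rfl
  rw [hrw1, hrw2]
  show L = Subgroup.closure {a', b', cen mu}
  apply le_antisymm
  · intro γ hγ
    have hγP : ((γ.x, γ.y) : ℝ × ℝ) ∈ P := (hPmem _).2 ⟨γ, hγ, rfl⟩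
    set xP : P := ⟨(γ.x, γ.y), hγP⟩ with hxP
    set p : ℤ := B2.repr xP 0 with hp
    set q : ℤ := B2.repr xP 1 with hq
    have hrepr : p • (B2 0) + q • (B2 1) = xP := by
      have h1 := B2.sum_repr xP
      rw [Fin.sum_univ_two] at h1
      exact h1
    have hrepr' : (p • u + q • v : ℝ × ℝ) = (γ.x, γ.y) := by
      have := congrArg (Subtype.val : P → ℝ × ℝ) hrepr
      simpa [hu, hv] using this
    have hcompx : (p : ℝ) * u.1 + (q : ℝ) * v.1 = γ.x := by
      have := congrArg Prod.fst hrepr'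
      simpa [Prod.smul_def, smul_eq_mul] using this
    have hcompy : (p : ℝ) * u.2 + (q : ℝ) * v.2 = γ.y := by
      have := congrArg Prod.snd hrepr'
      simpa [Prod.smul_def, smul_eq_mul] using this
    set h : Heisenberg := (a' ^ p * b' ^ q)⁻¹ * γ with hh
    have hhL : h ∈ L := mul_mem (inv_mem (mul_mem (zpow_mem ha'L p) (zpow_mem hb'L q))) hγ
    have hhx : h.x = 0 := by
      show (-(a' ^ p * b' ^ q).x) + γ.x = 0
      rw [mul_x, zpow_x, zpow_x, ha'x, hb'x]
      linarith [hcompx]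
    have hhy : h.y = 0 := by
      show (-(a' ^ p * b' ^ q).y) + γ.y = 0
      rw [mul_y, zpow_y, zpow_y, ha'y, hb'y]
      linarith [hcompy]
    have hcenh : h = cen h.z := eq_cen_of_xy hhx hhy
    have hzZc : h.z ∈ Zc := by
      rw [hZcmem, ← hcenh]
      exact hhL
    obtain ⟨m, hm⟩ := hZcmu h.z hzZc
    have ha'cl : a' ∈ Subgroup.closure {a', b', cen mu} :=
      Subgroup.subset_closure (by simp)
    have hb'cl : b' ∈ Subgroup.closure {a', b', cen mu} :=
      Subgroup.subset_closure (by simp)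
    have hccl : cen mu ∈ Subgroup.closure {a', b', cen mu} :=
      Subgroup.subset_closure (by simp)
    have hhcl : h ∈ Subgroup.closure {a', b', cen mu} := by
      rw [hcenh, hm, ← cen_zpow]
      exact zpow_mem hccl m
    have : γ = (a' ^ p * b' ^ q) * h := by
      rw [hh, mul_inv_cancel_left]
    rw [this]
    exact mul_mem (mul_mem (zpow_mem ha'cl p) (zpow_mem hb'cl q)) hhcl
  · rw [Subgroup.closure_le]
    rintro g (rfl | rfl | rfl)
    · exact ha'L
    · exact hb'L
    · exact hmumem

end Heisenberg

/-- A subgroup `L ≤ H_ℝ` is a lattice (discrete with finite-covolume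
quotient; equivalently, since `H_ℝ` is nilpotent, discrete and cocompact) if and only if
it is generated by elements `(u,r)`, `(v,s)` and the central element `(0,0,λ/n)`, where
`u, v ∈ ℝ²` are linearly independent, `λ = det(u,v)` (the `z`-component of the cross
product `(u,0) × (v,0)`), `r, s ∈ ℝ` and `n ∈ ℕ` is positive. -/
theorem heisenberg_lattice_characterization (L : Subgroup Heisenberg) :
    (DiscreteTopology L ∧
      ∃ K : Set Heisenberg, IsCompact K ∧ ∀ g : Heisenberg, ∃ k ∈ K, ∃ γ ∈ L, g = k * γ)
    ↔ ∃ (u v : ℝ × ℝ) (r s : ℝ) (n : ℕ), 0 < n ∧ u.1 * v.2 - u.2 * v.1 ≠ 0 ∧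
        L = Subgroup.closure
          {⟨u.1, u.2, r⟩, ⟨v.1, v.2, s⟩, ⟨0, 0, (u.1 * v.2 - u.2 * v.1) / n⟩} := by
  constructor
  · rintro ⟨hdisc, K, hK, hcov⟩
    exact Heisenberg.generators_of_lattice L hdisc K hK hcov
  · rintro ⟨u, v, r, s, n, hn, hlam, hL⟩
    exact Heisenberg.lattice_of_generators L u v r s n hn hlam hL
end

section
/- Let Γ be a subgroup of PSL₂(ℝ) having the identity as an accumulation point (i.e., Γ is not discrete), and let Λ ⊆ Γ be a nontrivial normal discrete subgroup. Then Λ is cyclic and Γ contains a commutative subgroup of finite index. -/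
abbrev SL2R := Matrix.SpecialLinearGroup (Fin 2) ℝ

/-- The topology on `SL₂(ℝ)`, induced from the space of matrices. -/
instance : TopologicalSpace SL2R :=
  TopologicalSpace.induced (fun A => (A : Matrix (Fin 2) (Fin 2) ℝ)) inferInstance

/-- `PSL₂(ℝ) = SL₂(ℝ)/{±1}`, with the quotient topology. -/
abbrev PSL2R := SL2R ⧸ Subgroup.center SL2R

open Matrix

noncomputable section

instance : IsTopologicalGroup SL2R := by
  refine { continuous_mul := ?_, continuous_inv := ?_ }
  · apply continuous_induced_rng.mpr
    exact ((continuous_induced_dom.comp continuous_fst).matrix_mul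
      (continuous_induced_dom.comp continuous_snd))
  · apply continuous_induced_rng.mpr
    have h : (fun A : SL2R => ((A⁻¹ : SL2R) : Matrix (Fin 2) (Fin 2) ℝ))
        = fun A : SL2R => Matrix.adjugate (A : Matrix (Fin 2) (Fin 2) ℝ) := by
      funext A; exact Matrix.SpecialLinearGroup.coe_inv A
    show Continuous fun A : SL2R => ((A⁻¹ : SL2R) : Matrix (Fin 2) (Fin 2) ℝ)
    rw [h]
    exact Continuous.matrix_adjugate continuous_induced_dom

instance : IsTopologicalGroup PSL2R := inferInstance

instance : T2Space SL2R := by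
  have : Topology.IsEmbedding (fun A : SL2R => (A : Matrix (Fin 2) (Fin 2) ℝ)) :=
    ⟨⟨rfl⟩, Subtype.coe_injective⟩
  exact this.t2Space

/-- The two central elements of SL2R. -/
def negOne : SL2R := ⟨-1, by simp [Matrix.det_neg]⟩

lemma mem_center_iff' (Z : SL2R) : Z ∈ Subgroup.center SL2R ↔
    (Z : Matrix (Fin 2) (Fin 2) ℝ) = 1 ∨ (Z : Matrix (Fin 2) (Fin 2) ℝ) = -1 := by
  rw [Matrix.SpecialLinearGroup.mem_center_iff]
  constructor
  · rintro ⟨r, hr, hZ⟩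
    simp only [Fintype.card_fin] at hr
    have : (r - 1) * (r + 1) = 0 := by linear_combination hr
    rcases mul_eq_zero.mp this with h' | h'
    · left; rw [← hZ, show r = 1 by linarith]; simp
    · right; rw [← hZ, show r = -1 by linarith]
      ext i j
      simp [Matrix.scalar_apply, Matrix.diagonal_apply, Matrix.one_apply, Matrix.neg_apply]
      split <;> simp
  · rintro (h | h)
    · exact ⟨1, by norm_num, by rw [h]; simp⟩
    · refine ⟨-1, by norm_num, ?_⟩
      rw [h]
      ext i j
      simp [Matrix.scalar_apply, Matrix.diagonal_apply, Matrix.one_apply, Matrix.neg_apply]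
      split <;> simp

lemma center_closed : IsClosed ((Subgroup.center SL2R : Subgroup SL2R) : Set SL2R) := by
  have hsub : ((Subgroup.center SL2R : Subgroup SL2R) : Set SL2R) ⊆ {1, negOne} := by
    intro Z hZ
    rcases (mem_center_iff' Z).mp hZ with h | h
    · left; exact Subtype.coe_injective (by simpa using h)
    · right; exact Subtype.coe_injective (by simpa [negOne] using h)
  exact (Set.Finite.subset (Set.toFinite _) hsub).isClosed

instance : T3Space PSL2R := by
  have : IsClosed ((Subgroup.center SL2R : Subgroup SL2R) : Set SL2R) := center_closed
  exact QuotientGroup.instT3Space _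

instance : T2Space PSL2R := inferInstance


lemma sq_eq (A : Matrix (Fin 2) (Fin 2) ℝ) :
    A * A = A.trace • A - A.det • (1 : Matrix (Fin 2) (Fin 2) ℝ) := by
  ext i j
  fin_cases i <;> fin_cases j <;>
    simp [Matrix.mul_apply, Fin.sum_univ_two, Matrix.trace_fin_two, Matrix.det_fin_two,
      Matrix.one_apply] <;> ring

lemma trace_zero_of_anticomm (A B : Matrix (Fin 2) (Fin 2) ℝ) (hA : A.det = 1)
    (hB : B.det = 1) (h : A * B = -(B * A)) : A.trace = 0 := by
  have h2 : (A * A) * B = B * (A * A) := by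
    calc (A * A) * B = A * (A * B) := by rw [Matrix.mul_assoc]
    _ = A * (-(B * A)) := by rw [h]
    _ = -(A * B) * A := by noncomm_ring
    _ = (B * A) * A := by rw [h]; noncomm_ring
    _ = B * (A * A) := by rw [Matrix.mul_assoc]
  rw [sq_eq, hA] at h2
  simp only [Matrix.sub_mul, Matrix.mul_sub, Matrix.smul_mul, Matrix.mul_smul,
    Matrix.one_mul, Matrix.mul_one] at h2
  have h3 : A.trace • (A * B) = A.trace • (B * A) := sub_left_inj.mp h2
  rw [h, smul_neg, neg_eq_iff_add_eq_zero, ← two_smul ℝ, smul_smul] at h3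
  rcases smul_eq_zero.mp h3 with h4 | h4
  · by_contra htr
    exact htr (by linarith [mul_eq_zero.mp h4] : A.trace = 0)
  · have : (B * A).det = 1 := by rw [Matrix.det_mul, hA, hB]; ring
    rw [h4] at this
    simp at this


lemma no_anticomm (A B : Matrix (Fin 2) (Fin 2) ℝ) (hA : A.det = 1)
    (hB : B.det = 1) (h : A * B = -(B * A)) : False := by
  have htA : A.trace = 0 := trace_zero_of_anticomm A B hA hB h
  have htB : B.trace = 0 := by
    refine trace_zero_of_anticomm B A hB hA ?_
    rw [h, neg_neg]
  have e00 := congrFun (congrFun h 0) 0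
  simp [Matrix.mul_apply, Fin.sum_univ_two, Matrix.neg_apply] at e00
  rw [Matrix.trace_fin_two] at htA htB
  rw [Matrix.det_fin_two] at hA hB
  set a := A 0 0; set b := A 0 1; set c := A 1 0; set d := A 1 1
  set p := B 0 0; set q := B 0 1; set r := B 1 0; set s := B 1 1
  have hd : d = -a := by linarith
  have hs : s = -p := by linarith
  rw [hd] at hA; rw [hs] at hB
  -- hA : a * (-a) - b * c = 1, hB : p * (-p) - q * r = 1, e00 : a*p + b*r = -(p*a + q*c)
  have h1 : a^2 + b*c = -1 := by linear_combination -hA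
  have h2 : p^2 + q*r = -1 := by linear_combination -hB
  have h3 : 2*(a*p) + b*r + q*c = 0 := by linear_combination e00
  have key : (q*a - b*p)^2 = -q^2 - b^2 := by
    linear_combination (q^2)*h1 + (b^2)*h2 - (q*b)*h3
  have hq : q = 0 ∧ b = 0 := by
    constructor <;> nlinarith [sq_nonneg (q*a - b*p), sq_nonneg q, sq_nonneg b]
  rw [hq.2] at h1
  nlinarith [sq_nonneg a, h1]


lemma commutant (A B : Matrix (Fin 2) (Fin 2) ℝ) (h : A * B = B * A)
    (hA : ¬(A 0 1 = 0 ∧ A 1 0 = 0 ∧ A 0 0 = A 1 1)) :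
    ∃ x y : ℝ, B = x • (1 : Matrix (Fin 2) (Fin 2) ℝ) + y • A := by
  have e00 := congrFun (congrFun h 0) 0
  have e01 := congrFun (congrFun h 0) 1
  have e10 := congrFun (congrFun h 1) 0
  have e11 := congrFun (congrFun h 1) 1
  simp [Matrix.mul_apply, Fin.sum_univ_two] at e00 e01 e10 e11
  set a := A 0 0 with ha'; set b := A 0 1 with hb'; set c := A 1 0 with hc'
  set d := A 1 1 with hd'
  set p := B 0 0 with hp'; set q := B 0 1 with hq'; set r := B 1 0 with hr'
  set s := B 1 1 with hs'
  have R1 : b * r = q * c := by linarith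
  have R2 : q * (a - d) = b * (p - s) := by linarith
  have R3 : c * (p - s) = r * (a - d) := by linarith
  have hBeq : ∀ x y : ℝ, p = x + y * a → q = y * b → r = y * c → s = x + y * d →
      B = x • (1 : Matrix (Fin 2) (Fin 2) ℝ) + y • A := by
    intro x y h1 h2 h3 h4
    ext i j
    fin_cases i <;> fin_cases j <;> simp [Matrix.one_apply] <;>
      [exact h1; exact h2; exact h3; exact h4]
  push_neg at hA
  by_cases hb : b = 0
  · by_cases hc : c = 0
    · have had : a - d ≠ 0 := sub_ne_zero.mpr (hA hb hc)
      refine ⟨(s*a - p*d)/(a-d), (p - s)/(a-d), hBeq _ _ ?_ ?_ ?_ ?_⟩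
      · field_simp; ring
      · rw [hb]
        have hq0 : q = 0 := by
          rw [hb] at R2
          rcases mul_eq_zero.mp (by linarith [R2] : q * (a - d) = 0) with h' | h'
          · exact h'
          · exact absurd h' had
        rw [hq0]; ring
      · rw [hc]
        have hr0 : r = 0 := by
          rw [hc] at R3
          rcases mul_eq_zero.mp (by linarith [R3] : r * (a - d) = 0) with h' | h'
          · exact h'
          · exact absurd h' had
        rw [hr0]; ring
      · field_simp; ring
    · refine ⟨p - r/c * a, r/c, hBeq _ _ (by ring) ?_ (by field_simp) ?_⟩
      · rw [hb] at R1 ⊢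
        have : q = 0 := by
          rcases mul_eq_zero.mp (by linear_combination -R1 : q * c = 0) with h' | h'
          · exact h'
          · exact absurd h' hc
        rw [this]; ring
      · field_simp; linear_combination -R3
  · refine ⟨p - q/b * a, q/b, hBeq _ _ (by ring) (by field_simp) ?_ ?_⟩
    · field_simp; linear_combination R1
    · field_simp; linear_combination R2
-- PSL-level commuting lemmas
lemma psl_comm_lift (A C : SL2R)
    (h : (QuotientGroup.mk C : PSL2R) * QuotientGroup.mk A
       = QuotientGroup.mk A * QuotientGroup.mk C) :
    (C : Matrix (Fin 2) (Fin 2) ℝ) * (A : Matrix (Fin 2) (Fin 2) ℝ)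
      = (A : Matrix (Fin 2) (Fin 2) ℝ) * (C : Matrix (Fin 2) (Fin 2) ℝ) := by
  rw [← QuotientGroup.mk_mul, ← QuotientGroup.mk_mul, QuotientGroup.eq] at h
  set Z : SL2R := (C * A)⁻¹ * (A * C) with hZdef
  have key : A * C = (C * A) * Z := by rw [hZdef]; group
  have keyv : (A : Matrix (Fin 2) (Fin 2) ℝ) * (C : Matrix (Fin 2) (Fin 2) ℝ)
      = (C : Matrix (Fin 2) (Fin 2) ℝ) * (A : Matrix (Fin 2) (Fin 2) ℝ)
        * (Z : Matrix (Fin 2) (Fin 2) ℝ) := by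
    have := congrArg (fun X : SL2R => (X : Matrix (Fin 2) (Fin 2) ℝ)) key
    simpa using this
  rcases (mem_center_iff' Z).mp h with h' | h'
  · rw [h', mul_one] at keyv
    exact keyv.symm
  · have this := keyv
    rw [h'] at this
    have hanti : (A : Matrix (Fin 2) (Fin 2) ℝ) * (C : Matrix (Fin 2) (Fin 2) ℝ)
        = -((C : Matrix (Fin 2) (Fin 2) ℝ) * (A : Matrix (Fin 2) (Fin 2) ℝ)) := by
      rw [this]; simp
    exact absurd hanti (fun hh => no_anticomm _ _ A.2 C.2 hh)

lemma nonscalar_of_ne_one (A : SL2R) (hg : (QuotientGroup.mk A : PSL2R) ≠ 1) :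
    ¬((A : Matrix (Fin 2) (Fin 2) ℝ) 0 1 = 0 ∧ (A : Matrix (Fin 2) (Fin 2) ℝ) 1 0 = 0 ∧
      (A : Matrix (Fin 2) (Fin 2) ℝ) 0 0 = (A : Matrix (Fin 2) (Fin 2) ℝ) 1 1) := by
  rintro ⟨h1, h2, h3⟩
  apply hg
  rw [QuotientGroup.eq_one_iff]
  apply (mem_center_iff' A).mpr
  have hdet := A.2
  rw [Matrix.det_fin_two] at hdet
  rw [h1, h2, ← h3] at hdet
  have hsq : ((A : Matrix (Fin 2) (Fin 2) ℝ) 0 0 - 1) * ((A : Matrix (Fin 2) (Fin 2) ℝ) 0 0 + 1) = 0 := by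
    linear_combination hdet
  rcases mul_eq_zero.mp hsq with h' | h'
  · left
    ext i j
    fin_cases i <;> fin_cases j <;>
      simp [Matrix.one_apply, h1, h2, ← h3] <;> linarith
  · right
    ext i j
    fin_cases i <;> fin_cases j <;>
      simp [Matrix.one_apply, Matrix.neg_apply, h1, h2, ← h3] <;> linarith

lemma psl_centralizer_comm {g x y : PSL2R} (hg : g ≠ 1) (hx : x * g = g * x)
    (hy : y * g = g * y) : x * y = y * x := by
  obtain ⟨A, rfl⟩ := QuotientGroup.mk_surjective g
  obtain ⟨X, rfl⟩ := QuotientGroup.mk_surjective x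
  obtain ⟨Y, rfl⟩ := QuotientGroup.mk_surjective y
  have hns := nonscalar_of_ne_one A hg
  have hX := psl_comm_lift A X hx
  have hY := psl_comm_lift A Y hy
  obtain ⟨u, v, hXd⟩ := commutant _ _ hX.symm hns
  obtain ⟨w, z, hYd⟩ := commutant _ _ hY.symm hns
  have : (X : Matrix (Fin 2) (Fin 2) ℝ) * (Y : Matrix (Fin 2) (Fin 2) ℝ)
      = (Y : Matrix (Fin 2) (Fin 2) ℝ) * (X : Matrix (Fin 2) (Fin 2) ℝ) := by
    rw [hXd, hYd]
    simp only [Matrix.add_mul, Matrix.mul_add, Matrix.smul_mul, Matrix.mul_smul,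
      Matrix.one_mul, Matrix.mul_one, smul_smul]
    module
  rw [← QuotientGroup.mk_mul, ← QuotientGroup.mk_mul]
  congr 1
  exact Subtype.ext this
-- one-parameter subgroups
def Mmat (e b c x y : ℝ) : Matrix (Fin 2) (Fin 2) ℝ := !![x + y*e, y*b; y*c, x - y*e]

lemma Mmat_det (e b c x y : ℝ) : (Mmat e b c x y).det = x^2 - (e^2 + b*c)*y^2 := by
  simp [Mmat, Matrix.det_fin_two_of]; ring

lemma Mmat_mul (e b c x y x' y' : ℝ) : Mmat e b c x y * Mmat e b c x' y'
    = Mmat e b c (x*x' + (e^2+b*c)*y*y') (x*y' + y*x') := by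
  ext i j
  fin_cases i <;> fin_cases j <;>
    simp [Mmat, Matrix.mul_apply, Fin.sum_univ_two] <;> ring

def MSL (e b c x y : ℝ) (h : x^2 - (e^2 + b*c)*y^2 = 1) : SL2R :=
  ⟨Mmat e b c x y, by rw [Mmat_det]; exact h⟩

lemma MSL_congr (e b c x y x' y' : ℝ) (h : x^2 - (e^2 + b*c)*y^2 = 1)
    (h' : x'^2 - (e^2 + b*c)*y'^2 = 1) (hx : x = x') (hy : y = y') :
    MSL e b c x y h = MSL e b c x' y' h' := by
  apply Subtype.ext; rw [show (MSL e b c x y h : Matrix (Fin 2) (Fin 2) ℝ) = Mmat e b c x y from rfl]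
  rw [hx, hy]; rfl

lemma MSL_mul (e b c x y x' y' : ℝ) (h : x^2 - (e^2 + b*c)*y^2 = 1)
    (h' : x'^2 - (e^2 + b*c)*y'^2 = 1) :
    MSL e b c x y h * MSL e b c x' y' h'
      = MSL e b c (x*x' + (e^2+b*c)*y*y') (x*y' + y*x')
          (by linear_combination (x'^2 - (e^2+b*c)*y'^2) * h + h') := by
  apply Subtype.ext
  exact Mmat_mul e b c x y x' y'

lemma mk_MSL_neg (e b c x y : ℝ) (h : x^2 - (e^2 + b*c)*y^2 = 1)
    (h' : (-x)^2 - (e^2 + b*c)*(-y)^2 = 1) :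
    (QuotientGroup.mk (MSL e b c x y h) : PSL2R)
      = QuotientGroup.mk (MSL e b c (-x) (-y) h') := by
  have hmem : negOne ∈ Subgroup.center SL2R := by
    apply (mem_center_iff' negOne).mpr
    right; rfl
  have key : MSL e b c (-x) (-y) h' = MSL e b c x y h * negOne := by
    apply Subtype.ext
    show Mmat e b c (-x) (-y) = Mmat e b c x y * (-1)
    ext i j
    fin_cases i <;> fin_cases j <;>
      simp [Mmat, Matrix.mul_apply, Fin.sum_univ_two, Matrix.one_apply] <;> ring
  rw [key, QuotientGroup.mk_mul, (QuotientGroup.eq_one_iff negOne).mpr hmem, mul_one]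

lemma mk_MSL_continuous (e b c : ℝ) (f g : ℝ → ℝ) (hf : Continuous f) (hg : Continuous g)
    (h : ∀ s, (f s)^2 - (e^2 + b*c)*(g s)^2 = 1) :
    Continuous fun s => (QuotientGroup.mk (MSL e b c (f s) (g s) (h s)) : PSL2R) := by
  apply Continuous.comp continuous_quotient_mk'
  apply continuous_induced_rng.mpr
  show Continuous fun s => Mmat e b c (f s) (g s)
  apply continuous_matrix
  intro i j
  fin_cases i <;> fin_cases j <;> simp [Mmat] <;> fun_prop
lemma exists_one_param (g : PSL2R) (hg : g ≠ 1) :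
    ∃ ψ : ℝ → PSL2R, Continuous ψ ∧ (∀ s t : ℝ, ψ (s + t) = ψ s * ψ t) ∧
      ∀ x : PSL2R, x * g = g * x → x ∈ Set.range ψ := by
  obtain ⟨A, rfl⟩ := QuotientGroup.mk_surjective g
  have hns := nonscalar_of_ne_one A hg
  set a := (A : Matrix (Fin 2) (Fin 2) ℝ) 0 0 with ha
  set b := (A : Matrix (Fin 2) (Fin 2) ℝ) 0 1 with hb
  set c := (A : Matrix (Fin 2) (Fin 2) ℝ) 1 0 with hc
  set d := (A : Matrix (Fin 2) (Fin 2) ℝ) 1 1 with hd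
  set e : ℝ := (a - d)/2 with he
  set δ : ℝ := e^2 + b*c with hδ
  have hform : ∀ x : PSL2R, x * QuotientGroup.mk A = QuotientGroup.mk A * x →
      ∃ (u v : ℝ) (h : u^2 - δ*v^2 = 1), x = QuotientGroup.mk (MSL e b c u v h) := by
    intro x hx
    obtain ⟨C, rfl⟩ := QuotientGroup.mk_surjective x
    have hC := psl_comm_lift A C hx
    obtain ⟨p, q, hCd⟩ := commutant _ _ hC.symm hns
    have hCM : (C : Matrix (Fin 2) (Fin 2) ℝ) = Mmat e b c (p + q*(a+d)/2) q := by
      rw [hCd]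
      ext i j
      fin_cases i <;> fin_cases j <;>
        simp [Mmat, Matrix.one_apply, he, a, b, c, d] <;> ring
    have hdet : (p + q*(a+d)/2)^2 - δ*q^2 = 1 := by
      have := C.2
      rw [hCM, Mmat_det] at this
      linear_combination this
    exact ⟨p + q*(a+d)/2, q, hdet, congrArg _ (Subtype.ext hCM)⟩
  rcases lt_trichotomy δ 0 with hneg | hzero | hpos
  · -- elliptic case
    set r : ℝ := Real.sqrt (-δ) with hr
    have hr2 : r^2 = -δ := Real.sq_sqrt (by linarith)
    have hrpos : 0 < r := Real.sqrt_pos.mpr (by linarith)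
    have hrne : r ≠ 0 := ne_of_gt hrpos
    have hdet : ∀ s : ℝ, (Real.cos s)^2 - δ*(Real.sin s / r)^2 = 1 := by
      intro s
      have := Real.sin_sq_add_cos_sq s
      field_simp
      linear_combination r^2 * this - (Real.sin s)^2 * hr2
    refine ⟨fun s => QuotientGroup.mk (MSL e b c (Real.cos s) (Real.sin s / r) (hdet s)),
      mk_MSL_continuous e b c _ _ (by fun_prop) (by fun_prop) hdet, ?_, ?_⟩
    · intro s t
      rw [← QuotientGroup.mk_mul, MSL_mul]
      apply congrArg
      apply MSL_congr
      · rw [Real.cos_add, show (e:ℝ)^2 + b*c = -r^2 by linarith]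
        field_simp
        ring
      · rw [Real.sin_add]; field_simp; ring
    · intro x hx
      obtain ⟨u, v, h, rfl⟩ := hform x hx
      have huv : u^2 + (r*v)^2 = 1 := by linear_combination h + v^2 * hr2
      have hu1 : -1 ≤ u ∧ u ≤ 1 := by constructor <;> nlinarith [sq_nonneg (r*v)]
      have hsin : Real.sin (Real.arccos u) = |r*v| := by
        rw [Real.sin_arccos, show 1 - u^2 = (r*v)^2 by linarith, Real.sqrt_sq_eq_abs]
      rcases le_or_gt 0 (r*v) with hpos' | hneg'
      · refine ⟨Real.arccos u, ?_⟩
        apply congrArg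
        apply MSL_congr
        · exact Real.cos_arccos hu1.1 hu1.2
        · rw [hsin, abs_of_nonneg hpos']
          field_simp
      · refine ⟨-Real.arccos u, ?_⟩
        apply congrArg
        apply MSL_congr
        · rw [Real.cos_neg]; exact Real.cos_arccos hu1.1 hu1.2
        · rw [Real.sin_neg, hsin, abs_of_neg hneg']
          field_simp
  · -- parabolic case
    have hdet : ∀ s : ℝ, (1:ℝ)^2 - δ*s^2 = 1 := by intro s; rw [hzero]; ring
    refine ⟨fun s => QuotientGroup.mk (MSL e b c 1 s (hdet s)),
      mk_MSL_continuous e b c _ _ (by fun_prop) (by fun_prop) hdet, ?_, ?_⟩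
    · intro s t
      rw [← QuotientGroup.mk_mul, MSL_mul]
      apply congrArg
      apply MSL_congr
      · rw [show (e:ℝ)^2 + b*c = 0 from hzero]; ring
      · ring
    · intro x hx
      obtain ⟨u, v, h, rfl⟩ := hform x hx
      have hu : u^2 = 1 := by rw [hzero] at h; linarith
      have : (u - 1)*(u + 1) = 0 := by linear_combination hu
      rcases mul_eq_zero.mp this with h' | h'
      · refine ⟨v, ?_⟩
        apply congrArg
        apply MSL_congr
        · linarith
        · rfl
      · refine ⟨-v, ?_⟩
        rw [mk_MSL_neg e b c u v h (by linear_combination h)]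
        apply congrArg
        apply MSL_congr
        · linarith
        · rfl
  · -- hyperbolic case
    set r : ℝ := Real.sqrt δ with hr
    have hr2 : r^2 = δ := Real.sq_sqrt (by linarith)
    have hrpos : 0 < r := Real.sqrt_pos.mpr hpos
    have hrne : r ≠ 0 := ne_of_gt hrpos
    have hdet : ∀ s : ℝ, (Real.cosh s)^2 - δ*(Real.sinh s / r)^2 = 1 := by
      intro s
      have := Real.cosh_sq_sub_sinh_sq s
      field_simp
      linear_combination r^2 * this + (Real.sinh s)^2 * hr2
    refine ⟨fun s => QuotientGroup.mk (MSL e b c (Real.cosh s) (Real.sinh s / r) (hdet s)),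
      mk_MSL_continuous e b c _ _ (by fun_prop) (by fun_prop) hdet, ?_, ?_⟩
    · intro s t
      rw [← QuotientGroup.mk_mul, MSL_mul]
      apply congrArg
      apply MSL_congr
      · rw [Real.cosh_add, show (e:ℝ)^2 + b*c = r^2 by linarith]
        field_simp
      · rw [Real.sinh_add]; field_simp; ring
    · intro x hx
      obtain ⟨u, v, h, rfl⟩ := hform x hx
      have key : ∀ (u' v' : ℝ) (h' : u'^2 - δ*v'^2 = 1), 0 < u' →
          ∃ s, (QuotientGroup.mk (MSL e b c u' v' h') : PSL2R) =
            QuotientGroup.mk (MSL e b c (Real.cosh s) (Real.sinh s / r) (hdet s)) := by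
        intro u' v' h' hu'
        refine ⟨Real.arsinh (r*v'), ?_⟩
        apply congrArg
        apply MSL_congr
        · rw [Real.cosh_arsinh, show 1 + (r*v')^2 = u'^2 by linear_combination -h' + v'^2*hr2,
            Real.sqrt_sq hu'.le]
        · rw [Real.sinh_arsinh]; field_simp
      have hune : u ≠ 0 := by
        intro h0
        rw [h0] at h
        nlinarith [sq_nonneg v]
      rcases lt_or_gt_of_ne hune with hult | hugt
      · obtain ⟨s, hs⟩ := key (-u) (-v) (by linear_combination h) (by linarith)
        exact ⟨s, by rw [mk_MSL_neg e b c u v h (by linear_combination h)]; exact hs.symm ▸ hs⟩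
      · obtain ⟨s, hs⟩ := key u v h hugt
        exact ⟨s, hs.symm⟩
lemma cyclic_of_discrete_of_range (Λ : Subgroup PSL2R) (hdisc : DiscreteTopology Λ)
    (ψ : ℝ → PSL2R) (hcont : Continuous ψ) (hhom : ∀ s t : ℝ, ψ (s + t) = ψ s * ψ t)
    (hsub : (Λ : Set PSL2R) ⊆ Set.range ψ) : IsCyclic Λ := by
  have ψ0 : ψ 0 = 1 := by
    have h := hhom 0 0
    rw [add_zero] at h
    exact (left_eq_mul.mp h)
  have ψneg : ∀ t, ψ (-t) = (ψ t)⁻¹ := by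
    intro t
    apply eq_inv_of_mul_eq_one_left
    rw [← hhom, neg_add_cancel, ψ0]
  let Ψ : Multiplicative ℝ →* PSL2R :=
    MonoidHom.mk' (fun t => ψ (Multiplicative.toAdd t)) (fun a b => hhom _ _)
  have ψzsmul : ∀ (n : ℤ) (t : ℝ), ψ (n • t) = (ψ t) ^ n := by
    intro n t
    have : ψ (n • t) = Ψ ((Multiplicative.ofAdd t) ^ n) := by
      rw [← ofAdd_zsmul]
      rfl
    rw [this, map_zpow]
    rfl
  -- discreteness data
  have hopen : IsOpen ({(⟨1, Λ.one_mem⟩ : Λ)} : Set Λ) := isOpen_discrete _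
  rw [isOpen_induced_iff] at hopen
  obtain ⟨U, hUopen, hUpre⟩ := hopen
  have hU1 : (1 : PSL2R) ∈ U := by
    have : (⟨1, Λ.one_mem⟩ : Λ) ∈ Subtype.val ⁻¹' U := by rw [hUpre]; rfl
    exact this
  have hUonly : ∀ x ∈ Λ, x ∈ U → x = 1 := by
    intro x hx hxU
    have : (⟨x, hx⟩ : Λ) ∈ Subtype.val ⁻¹' U := hxU
    rw [hUpre] at this
    exact congrArg Subtype.val this
  -- the subgroups S and K of ℝ
  let S : AddSubgroup ℝ :=
    { carrier := {t | ψ t ∈ Λ}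
      add_mem' := fun {a} {b} ha hb => by
        show ψ (a + b) ∈ Λ
        rw [hhom]; exact Λ.mul_mem ha hb
      zero_mem' := by show ψ 0 ∈ Λ; rw [ψ0]; exact Λ.one_mem
      neg_mem' := fun {a} ha => by
        show ψ (-a) ∈ Λ
        rw [ψneg]; exact Λ.inv_mem ha }
  let K : AddSubgroup ℝ :=
    { carrier := {t | ψ t = 1}
      add_mem' := fun {a} {b} ha hb => by
        show ψ (a + b) = 1
        rw [hhom, ha, hb, one_mul]
      zero_mem' := ψ0
      neg_mem' := fun {a} ha => by
        show ψ (-a) = 1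
        rw [ψneg, ha, inv_one] }
  rcases AddSubgroup.dense_or_cyclic S with hSdense | ⟨aS, hSa⟩
  · rcases AddSubgroup.dense_or_cyclic K with hKdense | ⟨cK, hKc⟩
    · -- ψ is constant 1, so Λ is trivial hence cyclic
      have hψ1 : ψ = fun _ => 1 := by
        apply hcont.ext_on hKdense continuous_const
        intro t ht
        exact ht
      constructor
      refine ⟨⟨1, Λ.one_mem⟩, fun x => ⟨0, ?_⟩⟩
      obtain ⟨t, ht⟩ := hsub x.2
      apply Subtype.ext
      rw [← ht, hψ1]
      rfl
    · -- K is cyclic: contradiction with density of S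
      exfalso
      set ε : ℝ := if cK = 0 then 1 else |cK| with hε
      have hεpos : 0 < ε := by
        rw [hε]; split
        · norm_num
        · next h => exact abs_pos.mpr h
      have hOopen : IsOpen (ψ ⁻¹' U ∩ Metric.ball 0 ε) :=
        (hcont.isOpen_preimage U hUopen).inter Metric.isOpen_ball
      have h0O : (0:ℝ) ∈ ψ ⁻¹' U ∩ Metric.ball 0 ε := by
        constructor
        · show ψ 0 ∈ U; rw [ψ0]; exact hU1
        · simpa using hεpos
      obtain ⟨η, hηpos, hηsub⟩ := Metric.isOpen_iff.mp hOopen 0 h0O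
      obtain ⟨s₀, hs₀S, hs₀mem⟩ := hSdense.exists_mem_open isOpen_Ioo
        (Set.nonempty_Ioo.mpr (by positivity : (0:ℝ) < min η ε))
      obtain ⟨hs₀pos, hs₀lt⟩ := hs₀mem
      have hs₀O : s₀ ∈ ψ ⁻¹' U ∩ Metric.ball 0 ε := by
        apply hηsub
        simp only [Metric.mem_ball, Real.dist_eq, sub_zero]
        rw [abs_of_pos hs₀pos]
        exact lt_of_lt_of_le hs₀lt (min_le_left _ _)
      have hs₀K : s₀ ∈ K := by
        show ψ s₀ = 1
        exact hUonly _ hs₀S hs₀O.1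
      rw [hKc] at hs₀K
      obtain ⟨n, hn⟩ := AddSubgroup.mem_closure_singleton.mp hs₀K
      have hcK0 : cK ≠ 0 := by
        intro h0
        rw [h0] at hn
        simp at hn
        exact absurd hn.symm (ne_of_gt hs₀pos)
      have hn0 : n ≠ 0 := by
        intro h0
        rw [h0] at hn
        simp at hn
        exact absurd hn.symm (ne_of_gt hs₀pos)
      have habs : |((n:ℝ)) * cK| ≥ |cK| := by
        rw [abs_mul]
        have : (1:ℝ) ≤ |(n:ℝ)| := by
          rw [← Int.cast_abs]
          exact_mod_cast Int.one_le_abs hn0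
        nlinarith [abs_nonneg cK]
      rw [zsmul_eq_mul] at hn
      have hεcK : ε = |cK| := by rw [hε]; simp [hcK0]
      have : s₀ < |cK| := lt_of_lt_of_le hs₀lt (by rw [← hεcK]; exact min_le_right _ _)
      rw [← hn] at this
      have : |(n:ℝ) * cK| < |cK| := by
        rw [abs_of_pos (hn ▸ hs₀pos)]
        exact this
      linarith
  · -- S is cyclic, hence Λ is cyclic
    have haS : ψ aS ∈ Λ := by
      have : aS ∈ S := by
        rw [hSa]
        exact AddSubgroup.subset_closure rfl
      exact this
    constructor
    refine ⟨⟨ψ aS, haS⟩, fun x => ?_⟩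
    obtain ⟨t, ht⟩ := hsub x.2
    have htS : t ∈ S := by show ψ t ∈ Λ; rw [ht]; exact x.2
    rw [hSa] at htS
    obtain ⟨n, hn⟩ := AddSubgroup.mem_closure_singleton.mp htS
    refine ⟨n, ?_⟩
    apply Subtype.ext
    show (⟨ψ aS, haS⟩ : Λ).val ^ n = x.val
    rw [← ht, ← hn, ψzsmul]
lemma finite_mulAut_of_isCyclic (G : Type*) [Group G] [hc : IsCyclic G] :
    Finite (MulAut G) := by
  obtain ⟨g, hg⟩ := hc.exists_generator
  rcases finite_or_infinite G with hfin | hinf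
  · haveI : Finite G := hfin
    haveI : Finite (G ≃ G) := Equiv.finite_left
    exact Finite.of_injective (MulEquiv.toEquiv : MulAut G → (G ≃ G))
      (fun _ _ h => MulEquiv.toEquiv_injective h)
  · have hord : ¬ IsOfFinOrder g := by
      intro hord
      have hfin : (Subgroup.zpowers g : Set G).Finite := finite_zpowers.mpr hord
      have : (Set.univ : Set G).Finite := hfin.subset (fun x _ => hg x)
      exact not_finite_iff_infinite.mpr hinf (Set.finite_univ_iff.mp this)
    have hgen : ∀ φ : MulAut G, φ g = g ∨ φ g = g⁻¹ := by
      intro φ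
      obtain ⟨m, hm⟩ := Subgroup.mem_zpowers_iff.mp (hg (φ g))
      obtain ⟨k, hk⟩ := Subgroup.mem_zpowers_iff.mp (hg (φ.symm g))
      have hgkm : g = g ^ (m * k) := by
        conv_lhs => rw [← φ.apply_symm_apply g, ← hk, map_zpow, ← hm, ← _root_.zpow_mul]
      have hmk : m * k = 1 := by
        by_contra hne
        apply hord
        have h1 : g ^ (m * k - 1) = 1 := by
          rw [_root_.zpow_sub, ← hgkm, zpow_one, mul_inv_cancel]
        exact isOfFinOrder_iff_zpow_eq_one.mpr ⟨m * k - 1, by omega, h1⟩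
      rcases Int.mul_eq_one_iff_eq_one_or_neg_one.mp hmk with ⟨hm1, _⟩ | ⟨hm1, _⟩
      · left; rw [← hm, hm1, zpow_one]
      · right; rw [← hm, hm1]
        exact zpow_neg_one g
    have hne : g ≠ g⁻¹ := by
      intro hgg
      apply hord
      refine isOfFinOrder_iff_zpow_eq_one.mpr ⟨2, by omega, ?_⟩
      rw [show (2:ℤ) = 1 + 1 by ring, _root_.zpow_add, zpow_one]
      nth_rewrite 2 [hgg]
      exact mul_inv_cancel g
    refine Finite.of_injective (fun φ : MulAut G => (φ g = g : Prop)) ?_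
    intro φ φ' h
    simp only at h
    have heq : φ g = φ' g := by
      rcases hgen φ with h1 | h1 <;> rcases hgen φ' with h2 | h2
      · rw [h1, h2]
      · exfalso
        have : (φ' g = g) := by rw [← h]; exact h1
        rw [h2] at this
        exact hne this.symm
      · exfalso
        have : (φ g = g) := by rw [h]; exact h2
        rw [h1] at this
        exact hne this.symm
      · rw [h1, h2]
    apply MulEquiv.ext
    intro x
    obtain ⟨n, rfl⟩ := Subgroup.mem_zpowers_iff.mp (hg x)
    rw [map_zpow, map_zpow, heq]

/-- Let `Γ ≤ PSL2R` have the identity as an accumulation point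
(i.e. `Γ` is not discrete), and let `Λ ≤ Γ` be a nontrivial normal discrete subgroup.
Then `Λ` is cyclic and `Γ` contains a commutative subgroup of finite index. -/
theorem nondiscrete_with_discrete_normal_subgroup (Γ Λ : Subgroup PSL2R)
    (hacc : (1 : PSL2R) ∈ closure ((Γ : Set PSL2R) \ {1}))
    (hΛΓ : Λ ≤ Γ) (hΛnt : Λ ≠ ⊥) (hΛdisc : DiscreteTopology Λ)
    (hnormal : ∀ γ ∈ Γ, ∀ l ∈ Λ, γ * l * γ⁻¹ ∈ Λ) :
    IsCyclic Λ ∧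
      ∃ Γ₁ : Subgroup PSL2R, Γ₁ ≤ Γ ∧ (∀ a ∈ Γ₁, ∀ b ∈ Γ₁, a * b = b * a) ∧
        (Γ₁.subgroupOf Γ).FiniteIndex := by
  -- isolating neighborhoods from discreteness
  have hiso : ∀ l : PSL2R, ∀ hl : l ∈ Λ, ∃ U : Set PSL2R, IsOpen U ∧ l ∈ U ∧
      ∀ x ∈ Λ, x ∈ U → x = l := by
    intro l hl
    have hopen : IsOpen ({(⟨l, hl⟩ : Λ)} : Set Λ) := isOpen_discrete _
    rw [isOpen_induced_iff] at hopen
    obtain ⟨U, hUopen, hUpre⟩ := hopen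
    refine ⟨U, hUopen, ?_, ?_⟩
    · have : (⟨l, hl⟩ : Λ) ∈ Subtype.val ⁻¹' U := by rw [hUpre]; rfl
      exact this
    · intro x hx hxU
      have hmem : (⟨x, hx⟩ : Λ) ∈ Subtype.val ⁻¹' U := hxU
      rw [hUpre] at hmem
      exact congrArg Subtype.val hmem
  -- any two elements of Λ commute
  have hcomm : ∀ l ∈ Λ, ∀ μ ∈ Λ, l * μ = μ * l := by
    intro l hl μ hμ
    obtain ⟨U, hUo, hUl, hUonly⟩ := hiso l hl
    obtain ⟨V, hVo, hVμ, hVonly⟩ := hiso μ hμ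
    have hcl : Continuous fun x : PSL2R => x * l * x⁻¹ :=
      (continuous_id.mul continuous_const).mul continuous_inv
    have hcμ : Continuous fun x : PSL2R => x * μ * x⁻¹ :=
      (continuous_id.mul continuous_const).mul continuous_inv
    have hWo : IsOpen ((fun x : PSL2R => x * l * x⁻¹) ⁻¹' U ∩
        (fun x : PSL2R => x * μ * x⁻¹) ⁻¹' V) :=
      (hcl.isOpen_preimage U hUo).inter (hcμ.isOpen_preimage V hVo)
    have hW1 : (1 : PSL2R) ∈ (fun x : PSL2R => x * l * x⁻¹) ⁻¹' U ∩
        (fun x : PSL2R => x * μ * x⁻¹) ⁻¹' V := by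
      constructor <;> · show _ ∈ _; simpa using ‹_ ∈ _›
    obtain ⟨γ, hγW, hγΓd⟩ := (_root_.mem_closure_iff.mp hacc _ hWo hW1)
    obtain ⟨hγΓ, hγne⟩ := hγΓd
    rw [Set.mem_singleton_iff] at hγne
    have h1 : γ * l * γ⁻¹ = l := hUonly _ (hnormal γ hγΓ l hl) hγW.1
    have h2 : γ * μ * γ⁻¹ = μ := hVonly _ (hnormal γ hγΓ μ hμ) hγW.2
    have hc1 : l * γ = γ * l := (mul_inv_eq_iff_eq_mul.mp h1).symm
    have hc2 : μ * γ = γ * μ := (mul_inv_eq_iff_eq_mul.mp h2).symm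
    exact psl_centralizer_comm hγne hc1 hc2
  -- a nontrivial element of Λ
  rcases Subgroup.bot_or_exists_ne_one Λ with hbot | ⟨l₀, hl₀Λ, hl₀ne⟩
  · exact absurd hbot hΛnt
  obtain ⟨ψ, hψc, hψhom, hψrange⟩ := exists_one_param l₀ hl₀ne
  have hsub : (Λ : Set PSL2R) ⊆ Set.range ψ := fun x hx =>
    hψrange x (hcomm x hx l₀ hl₀Λ)
  have hcyc : IsCyclic Λ := cyclic_of_discrete_of_range Λ hΛdisc ψ hψc hψhom hsub
  refine ⟨hcyc, ?_⟩
  obtain ⟨gen, hgen⟩ := hcyc.exists_generator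
  have hg1Λ : (gen : PSL2R) ∈ Λ := gen.2
  have hg1ne : (gen : PSL2R) ≠ 1 := by
    intro h1
    apply hΛnt
    rw [eq_bot_iff]
    intro x hx
    obtain ⟨n, hn⟩ := Subgroup.mem_zpowers_iff.mp (hgen ⟨x, hx⟩)
    have : x = ((gen ^ n : Λ) : PSL2R) := (congrArg Subtype.val hn).symm
    rw [Subgroup.mem_bot]
    rw [this]
    push_cast
    rw [h1, _root_.one_zpow]
  refine ⟨Γ ⊓ Subgroup.centralizer {(gen : PSL2R)}, inf_le_left, ?_, ?_⟩
  · intro A hA B hB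
    have hAc := (Subgroup.mem_centralizer_iff.mp hA.2) _ (Set.mem_singleton _)
    have hBc := (Subgroup.mem_centralizer_iff.mp hB.2) _ (Set.mem_singleton _)
    exact psl_centralizer_comm hg1ne hAc.symm hBc.symm
  · -- finite index via the conjugation action on Λ
    have hconjmem : ∀ γ : ↥Γ, ∀ l : ↥Λ, (γ : PSL2R) * l * (γ : PSL2R)⁻¹ ∈ Λ :=
      fun γ l => hnormal _ γ.2 _ l.2
    have hconjmem' : ∀ γ : ↥Γ, ∀ l : ↥Λ, (γ : PSL2R)⁻¹ * l * (γ : PSL2R) ∈ Λ := by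
      intro γ l
      have := hnormal _ (Γ.inv_mem γ.2) _ l.2
      simpa using this
    let ρfun : ↥Γ → MulAut ↥Λ := fun γ =>
      { toFun := fun l => ⟨(γ : PSL2R) * l * (γ : PSL2R)⁻¹, hconjmem γ l⟩
        invFun := fun l => ⟨(γ : PSL2R)⁻¹ * l * (γ : PSL2R), hconjmem' γ l⟩
        left_inv := by intro l; apply Subtype.ext; show _ = (l : PSL2R); group
        right_inv := by intro l; apply Subtype.ext; show _ = (l : PSL2R); group
        map_mul' := by
          intro x y
          apply Subtype.ext
          push_cast
          group }
    let ρ : ↥Γ →* MulAut ↥Λ :=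
      { toFun := ρfun
        map_one' := by
          apply MulEquiv.ext
          intro l
          apply Subtype.ext
          show (1 : PSL2R) * l * (1 : PSL2R)⁻¹ = (l : PSL2R)
          group
        map_mul' := by
          intro γ γ'
          apply MulEquiv.ext
          intro l
          apply Subtype.ext
          show ((γ * γ' : ↥Γ) : PSL2R) * l * ((γ * γ' : ↥Γ) : PSL2R)⁻¹
            = (γ : PSL2R) * ((γ' : PSL2R) * l * (γ' : PSL2R)⁻¹) * (γ : PSL2R)⁻¹
          push_cast
          group }
    haveI : Finite (MulAut ↥Λ) := finite_mulAut_of_isCyclic ↥Λ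
    haveI : Finite ρ.range := Subtype.finite
    haveI hker : ρ.ker.FiniteIndex := Subgroup.finiteIndex_ker ρ
    apply Subgroup.finiteIndex_of_le (H := ρ.ker)
    intro γ hγ
    rw [Subgroup.mem_subgroupOf]
    refine ⟨γ.2, Subgroup.mem_centralizer_iff.mpr ?_⟩
    intro h hh
    rw [Set.mem_singleton_iff] at hh
    subst hh
    have := congrArg (fun φ : MulAut ↥Λ => ((φ ⟨(gen : PSL2R), hg1Λ⟩ : ↥Λ) : PSL2R)) hγ
    have heq : (γ : PSL2R) * (gen : PSL2R) * (γ : PSL2R)⁻¹ = (gen : PSL2R) := this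
    calc (gen : PSL2R) * γ = ((γ : PSL2R) * (gen : PSL2R) * (γ : PSL2R)⁻¹) * γ := by
          rw [heq]
      _ = (γ : PSL2R) * gen := by group
end
end
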